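/- arXiv:0905.3242 — 2 statements merged into one kernel-verified Lean document; each statement's English description precedes it below -/
import Mathlib

section
/- Let a ∈ C^{m+1}[0,1] and b ∈ C^m[0,1] be real-valued with m ≥ 1, and define U_m(x,λ) = exp(λx + Σ_{i=0}^{m} λ^{−i} ∫₀^x φ_i^{(+)}(t) dt), where the φ_i^{(+)} are given by the recurrence φ_0^{(+)} = a, φ_1^{(+)} = −(a' + a² + b)/2, φ_i^{(+)} = −(1/2)((φ_{i−1}^{(+)})' + Σ_{j=0}^{i−1} φ_j^{(+)} φ_{i−j−1}^{(+)}) for i ≥ 2. Then U_m ∈ C²[0,1], U_m(0,λ) = 1, U_m'(0,λ) = λ + Σ_{i=0}^m φ_i^{(+)}(0) λ^{−i}, and U_m'' − λ² U_m − 2λ a U_m + b U_m = λ^{−m} e^{λx} f_m(x,λ) on [0,1], where |f_m(x,λ)| ≤ C_m uniformly for all x ∈ [0,1] and all sufficiently large |λ|. -/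
/-- The coefficients `φᵢ^{(+)}`, defined by `φ₀ = a`, `φ₁ = −(a' + a² + b)/2`,
`φᵢ = −(1/2)(φ_{i−1}' + Σ_{j=0}^{i−1} φⱼ φ_{i−j−1})` for `i ≥ 2`, derivatives
being taken within `[0,1]`. -/
noncomputable def phiCoeffP (a b : ℝ → ℝ) : ℕ → ℝ → ℂ
  | 0 => fun x => (a x : ℂ)
  | 1 => fun x => ((-(derivWithin a (Set.Icc 0 1) x + (a x) ^ 2 + b x) / 2 : ℝ) : ℂ)
  | (i + 2) => fun x =>
      -(1 / 2 : ℂ) * (derivWithin (phiCoeffP a b (i + 1)) (Set.Icc 0 1) x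
        + ∑ j ∈ (Finset.range (i + 2)).attach,
            phiCoeffP a b j.1 x * phiCoeffP a b (i + 1 - j.1) x)
  termination_by n => n
  decreasing_by
    · omega
    · have := j.2; simp only [Finset.mem_range] at this; omega
    · omega

/-- `U_m(x,λ) = exp(λx + Σ_{i=0}^{m} λ^{−i} ∫₀ˣ φᵢ^{(+)}(t) dt)`. -/
noncomputable def Ufun (a b : ℝ → ℝ) (m : ℕ) (l : ℂ) (x : ℝ) : ℂ :=
  Complex.exp (l * x + ∑ i ∈ Finset.range (m + 1),
    l ^ (-(i : ℤ)) * ∫ t in (0:ℝ)..x, phiCoeffP a b i t)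

lemma phi_zero (a b : ℝ → ℝ) (x : ℝ) : phiCoeffP a b 0 x = (a x : ℂ) := by rw [phiCoeffP]

lemma phi_one (a b : ℝ → ℝ) (x : ℝ) :
    phiCoeffP a b 1 x = ((-(derivWithin a (Set.Icc 0 1) x + (a x) ^ 2 + b x) / 2 : ℝ) : ℂ) := by
  rw [phiCoeffP]

lemma phi_succ (a b : ℝ → ℝ) (i : ℕ) (x : ℝ) :
    phiCoeffP a b (i + 2) x = -(1 / 2 : ℂ) * (derivWithin (phiCoeffP a b (i + 1)) (Set.Icc 0 1) x
        + ∑ j ∈ Finset.range (i + 2), phiCoeffP a b j x * phiCoeffP a b (i + 1 - j) x) := by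
  rw [phiCoeffP]
  beta_reduce
  congr 2
  exact Finset.sum_attach (Finset.range (i+2)) (fun j => phiCoeffP a b j x * phiCoeffP a b (i + 1 - j) x)

lemma wt_cast_le {p q : ℕ} (h : p ≤ q) : (p : WithTop ℕ∞) ≤ (q : WithTop ℕ∞) := by
  exact_mod_cast h

lemma hD01 : UniqueDiffOn ℝ (Set.Icc (0:ℝ) 1) := uniqueDiffOn_Icc (by norm_num)

lemma phi_contDiff (m : ℕ) (a b : ℝ → ℝ) (ha : ContDiffOn ℝ (m + 1) a (Set.Icc 0 1))
    (hb : ContDiffOn ℝ m b (Set.Icc 0 1)) :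
    ∀ i, i ≤ m → ContDiffOn ℝ ((m + 1 - i : ℕ) : WithTop ℕ∞) (phiCoeffP a b i) (Set.Icc 0 1) := by
  have hcast : ((m + 1 : ℕ) : WithTop ℕ∞) = (m : WithTop ℕ∞) + 1 := by push_cast; rfl
  intro i
  induction i using Nat.strong_induction_on with
  | _ i IH =>
    match i with
    | 0 =>
      intro _
      have hg : ContDiffOn ℝ ((m + 1 - 0 : ℕ) : WithTop ℕ∞) a (Set.Icc 0 1) :=
        ha.of_le (by rw [← hcast]; exact wt_cast_le (by omega))
      exact (Complex.ofRealCLM.contDiff.comp_contDiffOn hg).congr (fun x _ => phi_zero a b x)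
    | 1 =>
      intro h1m
      have hd : ContDiffOn ℝ (m : WithTop ℕ∞) (derivWithin a (Set.Icc 0 1)) (Set.Icc 0 1) :=
        ha.derivWithin hD01 le_rfl
      have hg : ContDiffOn ℝ (m : WithTop ℕ∞)
          (fun x => -(derivWithin a (Set.Icc 0 1) x + (a x) ^ 2 + b x) / 2) (Set.Icc 0 1) := by
        refine ContDiffOn.div_const (ContDiffOn.neg ?_) 2
        exact (hd.add ((ha.of_le (by rw [← hcast]; exact wt_cast_le (by omega))).pow 2)).add hb
      have h2 : ((m + 1 - 1 : ℕ) : WithTop ℕ∞) = (m : WithTop ℕ∞) := by norm_num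
      rw [h2]
      exact (Complex.ofRealCLM.contDiff.comp_contDiffOn (n := (m : WithTop ℕ∞)) hg).congr
        (fun x _ => phi_one a b x)
    | (i + 2) =>
      intro him
      have h1 : ContDiffOn ℝ ((m + 1 - (i+1) : ℕ) : WithTop ℕ∞) (phiCoeffP a b (i+1)) (Set.Icc 0 1) :=
        IH (i+1) (by omega) (by omega)
      have hd : ContDiffOn ℝ ((m + 1 - (i+2) : ℕ) : WithTop ℕ∞)
          (derivWithin (phiCoeffP a b (i+1)) (Set.Icc 0 1)) (Set.Icc 0 1) := by
        refine h1.derivWithin hD01 ?_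
        have : ((m + 1 - (i+2) : ℕ) : WithTop ℕ∞) + 1 = ((m + 1 - (i+1) : ℕ) : WithTop ℕ∞) := by
          have : (m + 1 - (i+2) : ℕ) + 1 = (m + 1 - (i+1) : ℕ) := by omega
          rw [← this]; push_cast; rfl
        rw [this]
      have hsum : ContDiffOn ℝ ((m + 1 - (i+2) : ℕ) : WithTop ℕ∞)
          (fun x => ∑ j ∈ Finset.range (i+2), phiCoeffP a b j x * phiCoeffP a b (i + 1 - j) x)
          (Set.Icc 0 1) := by
        refine ContDiffOn.sum (fun j hj => ?_)
        have hj' : j < i + 2 := Finset.mem_range.1 hj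
        have hjm : j ≤ m := by omega
        have hj2 : i + 1 - j ≤ m := by omega
        exact ((IH j (by omega) hjm).of_le (wt_cast_le (by omega))).mul
          ((IH (i+1-j) (by omega) hj2).of_le (wt_cast_le (by omega)))
      exact (contDiffOn_const.mul (hd.add hsum)).congr (fun x _ => phi_succ a b i x)

lemma key_sum (m : ℕ) (hm : 1 ≤ m) (l : ℂ) (hl : l ≠ 0) (c d : ℕ → ℂ) (B : ℂ)
    (h0 : 2 * c 1 = -(d 0 + c 0 * c 0 + B))
    (hrec : ∀ k, 1 ≤ k → 2 * c (k+1) = -(d k + ∑ j ∈ Finset.range (k+1), c j * c (k-j))) :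
    (∑ i ∈ Finset.range (m+1), l ^ (-(i:ℤ)) * d i)
      + 2 * l * ((∑ i ∈ Finset.range (m+1), l ^ (-(i:ℤ)) * c i) - c 0)
      + (∑ i ∈ Finset.range (m+1), l ^ (-(i:ℤ)) * c i) ^ 2 + B
    = l ^ (-(m:ℤ)) * (d m + ∑ p ∈ (Finset.range (m+1) ×ˢ Finset.range (m+1)).filter
          (fun p => m ≤ p.1 + p.2), l ^ ((m:ℤ) - p.1 - p.2) * (c p.1 * c p.2)) := by
  -- first derivative sum: peel last
  have hA : (∑ i ∈ Finset.range (m+1), l ^ (-(i:ℤ)) * d i)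
      = (∑ k ∈ Finset.range m, l ^ (-(k:ℤ)) * d k) + l ^ (-(m:ℤ)) * d m :=
    Finset.sum_range_succ _ m
  -- 2l(Φ - c 0)
  have hB : 2 * l * ((∑ i ∈ Finset.range (m+1), l ^ (-(i:ℤ)) * c i) - c 0)
      = ∑ k ∈ Finset.range m, l ^ (-(k:ℤ)) * (2 * c (k+1)) := by
    rw [Finset.sum_range_succ' (fun i => l ^ (-(i:ℤ)) * c i) m]
    simp only [Nat.cast_zero, neg_zero, zpow_zero, one_mul]
    rw [add_sub_cancel_right, Finset.mul_sum]
    refine Finset.sum_congr rfl (fun k hk => ?_)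
    have : (2 * l) * (l ^ (-(k+1:ℕ):ℤ) * c (k+1)) = 2 * (l * l ^ (-(k+1:ℕ):ℤ)) * c (k+1) := by ring
    rw [this]
    have hz : l * l ^ (-(k+1:ℕ):ℤ) = l ^ (-(k:ℕ):ℤ) := by
      rw [show (-(k:ℕ):ℤ) = 1 + (-(k+1:ℕ):ℤ) by push_cast; ring, zpow_add₀ hl, zpow_one]
    rw [hz]; ring
  -- square as double sum
  have hSq : (∑ i ∈ Finset.range (m+1), l ^ (-(i:ℤ)) * c i) ^ 2
      = ∑ p ∈ (Finset.range (m+1) ×ˢ Finset.range (m+1)),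
          l ^ (-(p.1+p.2:ℕ):ℤ) * (c p.1 * c p.2) := by
    rw [sq, Finset.sum_mul_sum]
    rw [Finset.sum_product]
    refine Finset.sum_congr rfl (fun i _ => Finset.sum_congr rfl (fun j _ => ?_))
    rw [show (-((i,j).1+(i,j).2:ℕ):ℤ) = (-(i:ℤ)) + (-(j:ℤ)) by push_cast; ring, zpow_add₀ hl]
    ring
  -- split double sum
  have hsplit : ∑ p ∈ (Finset.range (m+1) ×ˢ Finset.range (m+1)),
        l ^ (-(p.1+p.2:ℕ):ℤ) * (c p.1 * c p.2)
      = (∑ p ∈ (Finset.range (m+1) ×ˢ Finset.range (m+1)).filter (fun p => ¬ m ≤ p.1 + p.2),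
          l ^ (-(p.1+p.2:ℕ):ℤ) * (c p.1 * c p.2))
        + (∑ p ∈ (Finset.range (m+1) ×ˢ Finset.range (m+1)).filter (fun p => m ≤ p.1 + p.2),
          l ^ (-(p.1+p.2:ℕ):ℤ) * (c p.1 * c p.2)) := by
    exact ((Finset.sum_filter_add_sum_filter_not _ (fun p => m ≤ p.1 + p.2) _).symm.trans
      (add_comm _ _))
  -- low part reindex
  have hlow : (∑ p ∈ (Finset.range (m+1) ×ˢ Finset.range (m+1)).filter (fun p => ¬ m ≤ p.1 + p.2),
          l ^ (-(p.1+p.2:ℕ):ℤ) * (c p.1 * c p.2))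
      = ∑ k ∈ Finset.range m, l ^ (-(k:ℤ)) * (∑ j ∈ Finset.range (k+1), c j * c (k - j)) := by
    have hR : ∑ k ∈ Finset.range m, l ^ (-(k:ℤ)) * (∑ j ∈ Finset.range (k+1), c j * c (k - j))
        = ∑ x ∈ (Finset.range m).sigma (fun k => Finset.range (k+1)),
            l ^ (-(x.1:ℤ)) * (c x.2 * c (x.1 - x.2)) := by
      rw [show (∑ k ∈ Finset.range m, l ^ (-(k:ℤ)) * (∑ j ∈ Finset.range (k+1), c j * c (k - j)))
          = ∑ k ∈ Finset.range m, ∑ j ∈ Finset.range (k+1), l ^ (-(k:ℤ)) * (c j * c (k - j))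
        from Finset.sum_congr rfl (fun k _ => Finset.mul_sum _ _ _)]
      exact Finset.sum_sigma' (Finset.range m) (fun k => Finset.range (k+1))
        (fun k j => l ^ (-(k:ℤ)) * (c j * c (k - j)))
    rw [hR]
    refine (Finset.sum_nbij' (i := fun (x : Σ _ : ℕ, ℕ) => ((x.2, x.1 - x.2) : ℕ × ℕ))
      (j := fun p => (⟨p.1 + p.2, p.1⟩ : Σ _ : ℕ, ℕ)) ?_ ?_ ?_ ?_ ?_).symm
    · intro x hx
      simp only [Finset.mem_sigma, Finset.mem_range] at hx
      simp only [Finset.mem_filter, Finset.mem_product, Finset.mem_range, not_le]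
      omega
    · intro p hp
      simp only [Finset.mem_filter, Finset.mem_product, Finset.mem_range, not_le] at hp
      simp only [Finset.mem_sigma, Finset.mem_range]
      omega
    · intro x hx
      simp only [Finset.mem_sigma, Finset.mem_range] at hx
      refine Sigma.ext (by simp; omega) (by simp)
    · intro p hp
      simp only [Finset.mem_filter, Finset.mem_product, Finset.mem_range, not_le] at hp
      have h2 : p.1 + p.2 - p.1 = p.2 := by omega
      simp [Prod.ext_iff, h2]
    · intro x hx
      simp only [Finset.mem_sigma, Finset.mem_range] at hx
      have h1 : x.2 + (x.1 - x.2) = x.1 := by omega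
      simp only [h1]
  -- high part
  have hhigh : (∑ p ∈ (Finset.range (m+1) ×ˢ Finset.range (m+1)).filter (fun p => m ≤ p.1 + p.2),
          l ^ (-(p.1+p.2:ℕ):ℤ) * (c p.1 * c p.2))
      = l ^ (-(m:ℤ)) * ∑ p ∈ (Finset.range (m+1) ×ˢ Finset.range (m+1)).filter
          (fun p => m ≤ p.1 + p.2), l ^ ((m:ℤ) - p.1 - p.2) * (c p.1 * c p.2) := by
    rw [Finset.mul_sum]
    refine Finset.sum_congr rfl (fun p hp => ?_)
    rw [show (-(p.1+p.2:ℕ):ℤ) = (-(m:ℤ)) + ((m:ℤ) - p.1 - p.2) by push_cast; ring,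
      zpow_add₀ hl]
    ring
  -- B as a sum
  have hBB : B = ∑ k ∈ Finset.range m, l ^ (-(k:ℤ)) * (if k = 0 then B else 0) := by
    rw [Finset.sum_eq_single_of_mem 0 (Finset.mem_range.2 hm)]
    · simp
    · intro k _ hk; simp [hk]
  -- the cancellation
  have hzero : ∑ k ∈ Finset.range m, (l ^ (-(k:ℤ)) * d k + l ^ (-(k:ℤ)) * (2 * c (k+1))
      + l ^ (-(k:ℤ)) * (∑ j ∈ Finset.range (k+1), c j * c (k - j))
      + l ^ (-(k:ℤ)) * (if k = 0 then B else 0)) = 0 := by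
    refine Finset.sum_eq_zero (fun k _ => ?_)
    have hb : d k + 2 * c (k+1) + (∑ j ∈ Finset.range (k+1), c j * c (k - j))
        + (if k = 0 then B else 0) = 0 := by
      rcases Nat.eq_zero_or_pos k with hk | hk
      · subst hk
        simp only [zero_add, Finset.sum_range_one, Nat.sub_zero, eq_self_iff_true, if_true]
        linear_combination h0
      · rw [if_neg (by omega)]
        linear_combination hrec k hk
    calc l ^ (-(k:ℤ)) * d k + l ^ (-(k:ℤ)) * (2 * c (k+1))
        + l ^ (-(k:ℤ)) * (∑ j ∈ Finset.range (k+1), c j * c (k - j))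
        + l ^ (-(k:ℤ)) * (if k = 0 then B else 0)
        = l ^ (-(k:ℤ)) * (d k + 2 * c (k+1) + (∑ j ∈ Finset.range (k+1), c j * c (k - j))
            + (if k = 0 then B else 0)) := by ring
      _ = 0 := by rw [hb, mul_zero]
  rw [hA, hB, hSq, hsplit, hlow, hhigh]
  rw [Finset.sum_add_distrib, Finset.sum_add_distrib, Finset.sum_add_distrib] at hzero
  nth_rewrite 1 [hBB]
  linear_combination hzero

lemma ofReal_hasDerivWithinAt {f : ℝ → ℝ} {u z : ℝ} {s : Set ℝ}
    (hf : HasDerivWithinAt f u s z) :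
    HasDerivWithinAt (fun y : ℝ => ((f y : ℝ) : ℂ)) ((u : ℝ) : ℂ) s z := by
  exact HasDerivWithinAt.ofReal_comp hf

set_option maxHeartbeats 1000000 in
/-- for `a ∈ C^{m+1}[0,1]`, `b ∈ C^m[0,1]`, `m ≥ 1` and `λ` large,
`U_m(·,λ) ∈ C²[0,1]`, `U_m(0,λ) = 1`, `U_m'(0,λ) = λ + Σ_{i=0}^m φᵢ^{(+)}(0) λ^{−i}`,
and `U_m'' − λ²U_m − 2λaU_m + bU_m = λ^{−m} e^{λx} f_m(x,λ)` with `|f_m(x,λ)| ≤ C_m`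
uniformly in `x ∈ [0,1]` and large `|λ|`. -/
theorem Um_properties (m : ℕ) (hm : 1 ≤ m) (a b : ℝ → ℝ)
    (ha : ContDiffOn ℝ (m + 1) a (Set.Icc 0 1))
    (hb : ContDiffOn ℝ m b (Set.Icc 0 1)) :
    ∃ (C R : ℝ) (f : ℂ → ℝ → ℂ), 0 < C ∧ 0 < R ∧
      ∀ l : ℂ, R ≤ ‖l‖ →
        ContDiffOn ℝ 2 (Ufun a b m l) (Set.Icc 0 1) ∧
        Ufun a b m l 0 = 1 ∧
        derivWithin (Ufun a b m l) (Set.Icc 0 1) 0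
          = l + ∑ i ∈ Finset.range (m + 1), phiCoeffP a b i 0 * l ^ (-(i : ℤ)) ∧
        (∀ x ∈ Set.Icc (0:ℝ) 1,
          derivWithin (derivWithin (Ufun a b m l) (Set.Icc 0 1)) (Set.Icc 0 1) x
              - l ^ 2 * Ufun a b m l x - 2 * l * (a x : ℂ) * Ufun a b m l x
              + (b x : ℂ) * Ufun a b m l x
            = l ^ (-(m : ℤ)) * Complex.exp (l * x) * f l x ∧
          ‖f l x‖ ≤ C) := by
  have hφ := phi_contDiff m a b ha hb
  have hφ1 : ∀ i, i ≤ m → ContDiffOn ℝ 1 (phiCoeffP a b i) (Set.Icc 0 1) := by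
    intro i hi
    exact (hφ i hi).of_le (by exact_mod_cast (by omega : 1 ≤ m + 1 - i))
  have hφc : ∀ i, i ≤ m → ContinuousOn (phiCoeffP a b i) (Set.Icc 0 1) :=
    fun i hi => (hφ1 i hi).continuousOn
  have hdc : ContinuousOn (derivWithin (phiCoeffP a b m) (Set.Icc 0 1)) (Set.Icc 0 1) := by
    refine (hφ m le_rfl).continuousOn_derivWithin hD01 ?_
    exact_mod_cast (by omega : 1 ≤ m + 1 - m)
  -- uniform bound on the coefficients
  set h : ℝ → ℝ := fun x => (∑ i ∈ Finset.range (m+1), ‖phiCoeffP a b i x‖)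
      + ‖derivWithin (phiCoeffP a b m) (Set.Icc 0 1) x‖ with hh
  have hhc : ContinuousOn h (Set.Icc 0 1) := by
    refine ContinuousOn.add ?_ hdc.norm
    exact continuousOn_finset_sum _ (fun i hi =>
      (hφc i (by have := Finset.mem_range.1 hi; omega)).norm)
  obtain ⟨z0, hz0D, hz0max⟩ := isCompact_Icc.exists_isMaxOn ⟨0, by norm_num⟩ hhc
  set M := max (h z0) 1 with hMdef
  have hM1 : (1:ℝ) ≤ M := le_max_right _ _
  have hM0 : (0:ℝ) < M := lt_of_lt_of_le one_pos hM1
  have hMφ : ∀ i, i ≤ m → ∀ x ∈ Set.Icc (0:ℝ) 1, ‖phiCoeffP a b i x‖ ≤ M := by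
    intro i hi x hx
    have h1 : ‖phiCoeffP a b i x‖ ≤ ∑ j ∈ Finset.range (m+1), ‖phiCoeffP a b j x‖ :=
      Finset.single_le_sum (f := fun j => ‖phiCoeffP a b j x‖) (fun j _ => norm_nonneg _)
        (Finset.mem_range.2 (by omega : i < m + 1))
    have h2 : (∑ j ∈ Finset.range (m+1), ‖phiCoeffP a b j x‖) ≤ h x :=
      le_add_of_nonneg_right (norm_nonneg _)
    exact le_trans h1 (le_trans (le_trans h2 (hz0max hx)) (le_max_left _ _))
  have hMd : ∀ x ∈ Set.Icc (0:ℝ) 1,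
      ‖derivWithin (phiCoeffP a b m) (Set.Icc 0 1) x‖ ≤ M := by
    intro x hx
    have h2 : ‖derivWithin (phiCoeffP a b m) (Set.Icc 0 1) x‖ ≤ h x :=
      le_add_of_nonneg_left (Finset.sum_nonneg (fun j _ => norm_nonneg _))
    exact le_trans (le_trans h2 (hz0max hx)) (le_max_left _ _)
  refine ⟨(M + ((m:ℝ)+1)^2 * M^2) * Real.exp (((m:ℝ)+1) * M) + 1, 1,
    fun l x => (derivWithin (phiCoeffP a b m) (Set.Icc 0 1) x
      + ∑ p ∈ (Finset.range (m+1) ×ˢ Finset.range (m+1)).filter (fun p => m ≤ p.1 + p.2),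
          l ^ ((m:ℤ) - p.1 - p.2) * (phiCoeffP a b p.1 x * phiCoeffP a b p.2 x))
      * Complex.exp (∑ i ∈ Finset.range (m+1),
          l ^ (-(i:ℤ)) * ∫ t in (0:ℝ)..x, phiCoeffP a b i t),
    by positivity, one_pos, ?_⟩
  intro l hl1
  have hl0 : l ≠ 0 := by
    intro h'
    rw [h'] at hl1
    simp at hl1
    linarith
  -- FTC
  have hFTC : ∀ i, i ≤ m → ∀ x ∈ Set.Icc (0:ℝ) 1,
      HasDerivWithinAt (fun u => ∫ t in (0:ℝ)..u, phiCoeffP a b i t)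
        (phiCoeffP a b i x) (Set.Icc 0 1) x := by
    intro i hi x hx
    haveI : Fact (x ∈ Set.Icc (0:ℝ) 1) := ⟨hx⟩
    refine intervalIntegral.integral_hasDerivWithinAt_right ?_ ?_ ((hφc i hi) x hx)
    · refine ContinuousOn.intervalIntegrable ((hφc i hi).mono ?_)
      rw [Set.uIcc_of_le hx.1]
      exact Set.Icc_subset_Icc le_rfl hx.2
    · exact ⟨Set.Icc 0 1, self_mem_nhdsWithin,
        (hφc i hi).aestronglyMeasurable measurableSet_Icc⟩
  have hS : ∀ x ∈ Set.Icc (0:ℝ) 1,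
      HasDerivWithinAt (fun y : ℝ => l * (y:ℂ) + ∑ i ∈ Finset.range (m+1),
          l ^ (-(i:ℤ)) * ∫ t in (0:ℝ)..y, phiCoeffP a b i t)
        (l + ∑ i ∈ Finset.range (m+1), l ^ (-(i:ℤ)) * phiCoeffP a b i x)
        (Set.Icc 0 1) x := by
    intro x hx
    have h1 : HasDerivWithinAt (fun y : ℝ => l * (y:ℂ)) l (Set.Icc 0 1) x := by
      simpa using ((Complex.ofRealCLM.hasDerivAt (x := x)).const_mul l).hasDerivWithinAt
    refine h1.add (HasDerivWithinAt.fun_sum (fun i hi => ?_))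
    exact (hFTC i (by have := Finset.mem_range.1 hi; omega) x hx).const_mul _
  have hUd : ∀ x ∈ Set.Icc (0:ℝ) 1,
      HasDerivWithinAt (Ufun a b m l)
        ((l + ∑ i ∈ Finset.range (m+1), l ^ (-(i:ℤ)) * phiCoeffP a b i x)
          * Ufun a b m l x) (Set.Icc 0 1) x := by
    intro x hx
    have h2 : Ufun a b m l = fun y : ℝ => Complex.exp (l * (y:ℂ) + ∑ i ∈ Finset.range (m+1),
        l ^ (-(i:ℤ)) * ∫ t in (0:ℝ)..y, phiCoeffP a b i t) := rfl
    rw [h2]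
    have h3 := (hS x hx).cexp
    convert h3 using 1
    rw [mul_comm]
  have hUderiv : ∀ x ∈ Set.Icc (0:ℝ) 1,
      derivWithin (Ufun a b m l) (Set.Icc 0 1) x
        = (l + ∑ i ∈ Finset.range (m+1), l ^ (-(i:ℤ)) * phiCoeffP a b i x)
          * Ufun a b m l x :=
    fun x hx => (hUd x hx).derivWithin (hD01 x hx)
  have hPd : ∀ x ∈ Set.Icc (0:ℝ) 1,
      HasDerivWithinAt (fun y => l + ∑ i ∈ Finset.range (m+1),
          l ^ (-(i:ℤ)) * phiCoeffP a b i y)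
        (∑ i ∈ Finset.range (m+1),
          l ^ (-(i:ℤ)) * derivWithin (phiCoeffP a b i) (Set.Icc 0 1) x)
        (Set.Icc 0 1) x := by
    intro x hx
    have h' := (hasDerivWithinAt_const x (Set.Icc (0:ℝ) 1) l).fun_add
      (HasDerivWithinAt.fun_sum (u := Finset.range (m+1))
        (A := fun i y => l ^ (-(i:ℤ)) * phiCoeffP a b i y)
        (A' := fun i => l ^ (-(i:ℤ)) * derivWithin (phiCoeffP a b i) (Set.Icc 0 1) x)
        (fun i hi => HasDerivWithinAt.const_mul (l ^ (-(i:ℤ)))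
          (((hφ1 i (by have := Finset.mem_range.1 hi; omega)).differentiableOn
            one_ne_zero x hx).hasDerivWithinAt)))
    simpa using h'
  have hU2 : ∀ x ∈ Set.Icc (0:ℝ) 1,
      derivWithin (derivWithin (Ufun a b m l) (Set.Icc 0 1)) (Set.Icc 0 1) x
        = (∑ i ∈ Finset.range (m+1),
            l ^ (-(i:ℤ)) * derivWithin (phiCoeffP a b i) (Set.Icc 0 1) x)
            * Ufun a b m l x
          + (l + ∑ i ∈ Finset.range (m+1), l ^ (-(i:ℤ)) * phiCoeffP a b i x)
            * ((l + ∑ i ∈ Finset.range (m+1), l ^ (-(i:ℤ)) * phiCoeffP a b i x)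
              * Ufun a b m l x) := by
    intro x hx
    rw [derivWithin_congr (fun y hy => hUderiv y hy) (hUderiv x hx)]
    exact ((hPd x hx).mul (hUd x hx)).derivWithin (hD01 x hx)
  have hPc : ContDiffOn ℝ 1 (fun y => l + ∑ i ∈ Finset.range (m+1),
      l ^ (-(i:ℤ)) * phiCoeffP a b i y) (Set.Icc 0 1) :=
    contDiffOn_const.add (ContDiffOn.sum (fun i hi => contDiffOn_const.mul
      (hφ1 i (by have := Finset.mem_range.1 hi; omega))))
  have hScd : ContDiffOn ℝ 2 (fun y : ℝ => l * (y:ℂ) + ∑ i ∈ Finset.range (m+1),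
      l ^ (-(i:ℤ)) * ∫ t in (0:ℝ)..y, phiCoeffP a b i t) (Set.Icc 0 1) := by
    rw [show (2 : WithTop ℕ∞) = 1 + 1 by norm_num, contDiffOn_succ_iff_derivWithin hD01]
    refine ⟨fun x hx => (hS x hx).differentiableWithinAt, ?_, ?_⟩
    · intro h'
      exact absurd h' (by norm_num)
    · exact hPc.congr (fun x hx => (hS x hx).derivWithin (hD01 x hx))
  have hC2 : ContDiffOn ℝ 2 (Ufun a b m l) (Set.Icc 0 1) :=
    (Complex.contDiff_exp.comp_contDiffOn hScd).congr (fun x _ => rfl)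
  have h0mem : (0:ℝ) ∈ Set.Icc (0:ℝ) 1 := Set.left_mem_Icc.2 (by norm_num)
  have hU0 : Ufun a b m l 0 = 1 := by
    simp [Ufun, intervalIntegral.integral_same]
  have hU0' : derivWithin (Ufun a b m l) (Set.Icc 0 1) 0
      = l + ∑ i ∈ Finset.range (m + 1), phiCoeffP a b i 0 * l ^ (-(i:ℤ)) := by
    rw [hUderiv 0 h0mem, hU0, mul_one]
    congr 1
    exact Finset.sum_congr rfl (fun i _ => mul_comm _ _)
  refine ⟨hC2, hU0, hU0', ?_⟩
  intro x hx
  constructor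
  · -- the differential equation
    have hda : HasDerivWithinAt a (derivWithin a (Set.Icc 0 1) x) (Set.Icc 0 1) x := by
      refine ((ha.differentiableOn ?_) x hx).hasDerivWithinAt
      simp
    have h0d : derivWithin (phiCoeffP a b 0) (Set.Icc 0 1) x
        = ((derivWithin a (Set.Icc 0 1) x : ℝ) : ℂ) := by
      rw [← (ofReal_hasDerivWithinAt hda).derivWithin (hD01 x hx)]
      exact derivWithin_congr (fun y _ => phi_zero a b y) (phi_zero a b x)
    have h0 : 2 * phiCoeffP a b 1 x = -(derivWithin (phiCoeffP a b 0) (Set.Icc 0 1) x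
        + phiCoeffP a b 0 x * phiCoeffP a b 0 x + (b x : ℂ)) := by
      rw [h0d, phi_one, phi_zero]
      push_cast
      ring
    have hrec : ∀ k, 1 ≤ k → 2 * phiCoeffP a b (k+1) x
        = -(derivWithin (phiCoeffP a b k) (Set.Icc 0 1) x
          + ∑ j ∈ Finset.range (k+1), phiCoeffP a b j x * phiCoeffP a b (k-j) x) := by
      intro k hk
      obtain ⟨k', rfl⟩ : ∃ k', k = k' + 1 := ⟨k - 1, by omega⟩
      rw [show k' + 1 + 1 = k' + 2 from rfl, phi_succ a b k' x]
      ring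
    have hkey := key_sum m hm l hl0 (fun i => phiCoeffP a b i x)
      (fun i => derivWithin (phiCoeffP a b i) (Set.Icc 0 1) x) (b x) h0 hrec
    beta_reduce at hkey
    rw [hU2 x hx]
    have hax : (a x : ℂ) = phiCoeffP a b 0 x := (phi_zero a b x).symm
    rw [hax]
    have hUx : Ufun a b m l x = Complex.exp (l * x) * Complex.exp
        (∑ i ∈ Finset.range (m+1), l ^ (-(i:ℤ)) * ∫ t in (0:ℝ)..x, phiCoeffP a b i t) := by
      rw [Ufun, Complex.exp_add]
    rw [hUx]
    linear_combination (Complex.exp (l * (x:ℂ)) * Complex.exp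
        (∑ i ∈ Finset.range (m+1), l ^ (-(i:ℤ)) * ∫ t in (0:ℝ)..x, phiCoeffP a b i t)) * hkey
  · -- the bound
    rw [norm_mul]
    have hgb : ‖derivWithin (phiCoeffP a b m) (Set.Icc 0 1) x
        + ∑ p ∈ (Finset.range (m+1) ×ˢ Finset.range (m+1)).filter (fun p => m ≤ p.1 + p.2),
            l ^ ((m:ℤ) - p.1 - p.2) * (phiCoeffP a b p.1 x * phiCoeffP a b p.2 x)‖
        ≤ M + ((m:ℝ)+1)^2 * M^2 := by
      refine le_trans (norm_add_le _ _) (add_le_add (hMd x hx) ?_)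
      have hterm : ∀ p ∈ (Finset.range (m+1) ×ˢ Finset.range (m+1)).filter
          (fun p => m ≤ p.1 + p.2),
          ‖l ^ ((m:ℤ) - p.1 - p.2) * (phiCoeffP a b p.1 x * phiCoeffP a b p.2 x)‖ ≤ M * M := by
        intro p hp
        obtain ⟨hpmem, hpsum⟩ := Finset.mem_filter.1 hp
        obtain ⟨hp1, hp2⟩ := Finset.mem_product.1 hpmem
        rw [norm_mul, norm_mul, norm_zpow]
        have h1 : ‖l‖ ^ ((m:ℤ) - p.1 - p.2) ≤ 1 :=
          zpow_le_one_of_nonpos₀ hl1 (by push_cast; omega)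
        have h2 : ‖phiCoeffP a b p.1 x‖ * ‖phiCoeffP a b p.2 x‖ ≤ M * M :=
          mul_le_mul (hMφ p.1 (by have := Finset.mem_range.1 hp1; omega) x hx)
            (hMφ p.2 (by have := Finset.mem_range.1 hp2; omega) x hx)
            (norm_nonneg _) hM0.le
        calc ‖l‖ ^ ((m:ℤ) - p.1 - p.2) * (‖phiCoeffP a b p.1 x‖ * ‖phiCoeffP a b p.2 x‖)
            ≤ 1 * (M * M) := by
              refine mul_le_mul h1 h2 (by positivity) (by norm_num)
          _ = M * M := one_mul _
      refine le_trans (norm_sum_le _ _) ?_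
      refine le_trans (Finset.sum_le_card_nsmul _ _ (M * M) hterm) ?_
      rw [nsmul_eq_mul]
      have hcard : (((Finset.range (m+1) ×ˢ Finset.range (m+1)).filter
          (fun p => m ≤ p.1 + p.2)).card : ℝ) ≤ ((m:ℝ)+1)^2 := by
        have h1 := Finset.card_filter_le (Finset.range (m+1) ×ˢ Finset.range (m+1))
          (fun p => m ≤ p.1 + p.2)
        have h2 : (Finset.range (m+1) ×ˢ Finset.range (m+1)).card = (m+1) * (m+1) := by
          rw [Finset.card_product, Finset.card_range]
        have : (((Finset.range (m+1) ×ˢ Finset.range (m+1)).filter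
            (fun p => m ≤ p.1 + p.2)).card : ℝ) ≤ ((m+1) * (m+1) : ℕ) := by
          exact_mod_cast le_trans h1 (le_of_eq h2)
        refine le_trans this ?_
        push_cast
        ring_nf
        exact le_refl _
      have hMM : (0:ℝ) ≤ M * M := by positivity
      calc (((Finset.range (m+1) ×ˢ Finset.range (m+1)).filter
            (fun p => m ≤ p.1 + p.2)).card : ℝ) * (M * M)
          ≤ ((m:ℝ)+1)^2 * (M * M) := mul_le_mul_of_nonneg_right hcard hMM
        _ = ((m:ℝ)+1)^2 * M^2 := by ring
    have heb : ‖Complex.exp (∑ i ∈ Finset.range (m+1),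
        l ^ (-(i:ℤ)) * ∫ t in (0:ℝ)..x, phiCoeffP a b i t)‖
        ≤ Real.exp (((m:ℝ)+1) * M) := by
      have hEb : ‖∑ i ∈ Finset.range (m+1),
          l ^ (-(i:ℤ)) * ∫ t in (0:ℝ)..x, phiCoeffP a b i t‖ ≤ ((m:ℝ)+1) * M := by
        refine le_trans (norm_sum_le _ _) ?_
        have hterm : ∀ i ∈ Finset.range (m+1),
            ‖l ^ (-(i:ℤ)) * ∫ t in (0:ℝ)..x, phiCoeffP a b i t‖ ≤ M := by
          intro i hi
          have him : i ≤ m := by have := Finset.mem_range.1 hi; omega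
          rw [norm_mul, norm_zpow]
          have h1 : ‖l‖ ^ (-(i:ℤ)) ≤ 1 :=
            zpow_le_one_of_nonpos₀ hl1 (by omega)
          have h2 : ‖∫ t in (0:ℝ)..x, phiCoeffP a b i t‖ ≤ M * |x - 0| := by
            refine intervalIntegral.norm_integral_le_of_norm_le_const (fun t ht => ?_)
            rw [Set.uIoc_of_le hx.1] at ht
            exact hMφ i him t ⟨le_of_lt ht.1, le_trans ht.2 hx.2⟩
          have h3 : M * |x - 0| ≤ M := by
            rw [sub_zero, abs_of_nonneg hx.1]
            nlinarith [hx.2, hM0]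
          calc ‖l‖ ^ (-(i:ℤ)) * ‖∫ t in (0:ℝ)..x, phiCoeffP a b i t‖
              ≤ 1 * M := mul_le_mul h1 (le_trans h2 h3) (norm_nonneg _) (by norm_num)
            _ = M := one_mul _
        refine le_trans (Finset.sum_le_card_nsmul _ _ M hterm) ?_
        rw [nsmul_eq_mul, Finset.card_range]
        push_cast
        exact le_refl _
      rw [Complex.norm_exp]
      refine Real.exp_le_exp.2 (le_trans (Complex.re_le_norm _) ?_)
      exact hEb
    have hprod := mul_le_mul hgb heb (norm_nonneg _) (by positivity)
    refine le_trans hprod ?_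
    linarith
end

section
/- Let a ∈ C²[0,1] and b ∈ C¹[0,1] be real-valued, and let γ_0(λ) = u(1,λ) where u(·,λ) solves u'' − (λ² + 2λ a − b)u = 0 with u(0,λ) = 0, u'(0,λ) = 1. Then there is a constant C such that |γ_0(λ)| ≤ C|λ|^{−1} e^{|λ|} for all sufficiently large |λ|; consequently γ_0 is an entire function of order one, and the series Σ_{n>p} |λ_n|^{−2} over its nonzero zeros λ_n converges, so the genus of the canonical product associated with γ_0 is one. -/
open Set Filter Topology

namespace G0Aux

variable {E : Type*} [NormedAddCommGroup E] [NormedSpace ℝ E]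

lemma uD : UniqueDiffOn ℝ (Icc (0:ℝ) 1) := uniqueDiffOn_Icc one_pos

lemma hasDerivAt_of_cd2 {v : ℝ → E} (hv : ContDiffOn ℝ 2 v (Icc 0 1))
    {x : ℝ} (hx : x ∈ Ioo (0:ℝ) 1) :
    HasDerivAt v (derivWithin v (Icc 0 1) x) x := by
  have hmem : Icc (0:ℝ) 1 ∈ 𝓝 x := Icc_mem_nhds hx.1 hx.2
  have hdiff : DifferentiableWithinAt ℝ v (Icc 0 1) x :=
    (hv.differentiableOn (by norm_num)) x (Ioo_subset_Icc_self hx)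
  have h := (hdiff.differentiableAt hmem).hasDerivAt
  rwa [derivWithin_of_mem_nhds hmem]

lemma cd1_derivWithin {v : ℝ → E} (hv : ContDiffOn ℝ 2 v (Icc 0 1)) :
    ContDiffOn ℝ 1 (derivWithin v (Icc 0 1)) (Icc 0 1) :=
  hv.derivWithin uD (by norm_num)

lemma D2 {v : ℝ → E} (hv : ContDiffOn ℝ 2 v (Icc 0 1)) {x : ℝ} (hx : x ∈ Ioo (0:ℝ) 1) :
    HasDerivAt (derivWithin v (Icc 0 1)) (deriv (deriv v) x) x ∧
    derivWithin (derivWithin v (Icc 0 1)) (Icc 0 1) x = deriv (deriv v) x := by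
  set V1 := derivWithin v (Icc 0 1) with hV1def
  have hmem : Icc (0:ℝ) 1 ∈ 𝓝 x := Icc_mem_nhds hx.1 hx.2
  have hV1 : ContDiffOn ℝ 1 V1 (Icc 0 1) := cd1_derivWithin hv
  have hdiffV1 : DifferentiableAt ℝ V1 x :=
    ((hV1.differentiableOn (by norm_num)) x (Ioo_subset_Icc_self hx)).differentiableAt hmem
  have heq : V1 =ᶠ[𝓝 x] deriv v := by
    filter_upwards [Ioo_mem_nhds hx.1 hx.2] with y hy
    exact derivWithin_of_mem_nhds (Icc_mem_nhds hy.1 hy.2)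
  have h1 : HasDerivAt V1 (deriv V1 x) x := hdiffV1.hasDerivAt
  have h2 : deriv V1 x = deriv (deriv v) x := heq.deriv_eq
  have h3 : derivWithin V1 (Icc 0 1) x = deriv V1 x := derivWithin_of_mem_nhds hmem
  exact ⟨h2 ▸ h1, by rw [h3, h2]⟩

lemma nonneg_on_Icc_of_nonneg_on_Ioo {g : ℝ → ℝ} (hg : ContinuousOn g (Icc 0 1))
    (h : ∀ x ∈ Ioo (0:ℝ) 1, 0 ≤ g x) : ∀ x ∈ Icc (0:ℝ) 1, 0 ≤ g x := by
  intro x hx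
  have hx' : x ∈ closure (Ioo (0:ℝ) 1) := by
    rw [closure_Ioo (by norm_num : (0:ℝ) ≠ 1)]; exact hx
  have hne : (𝓝[Ioo (0:ℝ) 1] x).NeBot := mem_closure_iff_nhdsWithin_neBot.mp hx'
  have ht : Tendsto g (𝓝[Ioo (0:ℝ) 1] x) (𝓝 (g x)) := (hg x hx).mono Ioo_subset_Icc_self
  exact ge_of_tendsto ht (eventually_nhdsWithin_of_forall h)


lemma gronwall_upper {v : ℝ → ℂ} {q : ℝ → ℂ} {μ : ℝ} (hμ : 0 < μ)
    (hv : ContDiffOn ℝ 2 v (Icc 0 1))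
    (hode : ∀ x ∈ Ioo (0:ℝ) 1, deriv (deriv v) x = q x * v x)
    (hqb : ∀ x ∈ Ioo (0:ℝ) 1, ‖q x‖ ≤ μ ^ 2)
    (hv0 : v 0 = 0) (hv0' : derivWithin v (Icc 0 1) 0 = 1) :
    μ * ‖v 1‖ ≤ Real.exp μ := by
  set V1 := derivWithin v (Icc 0 1) with hV1def
  set V2 := derivWithin V1 (Icc 0 1) with hV2def
  have hV1c : ContDiffOn ℝ 1 V1 (Icc 0 1) := cd1_derivWithin hv
  have hV2cont : ContinuousOn V2 (Icc 0 1) := hV1c.continuousOn_derivWithin uD le_rfl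
  -- pointwise bound on V2
  have hbound : ∀ x ∈ Icc (0:ℝ) 1, ‖V2 x‖ ≤ μ ^ 2 * ‖v x‖ := by
    have := nonneg_on_Icc_of_nonneg_on_Ioo
      (g := fun x => μ ^ 2 * ‖v x‖ - ‖V2 x‖)
      (by exact (continuousOn_const.mul hv.continuousOn.norm).sub hV2cont.norm)
      (by
        intro x hx
        show 0 ≤ μ ^ 2 * ‖v x‖ - ‖V2 x‖
        have h2 : V2 x = q x * v x := by
          rw [hV2def, (D2 hv hx).2, hode x hx]
        rw [h2, sub_nonneg, norm_mul]
        exact mul_le_mul_of_nonneg_right (hqb x hx) (norm_nonneg _))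
    intro x hx
    have h3 := this x hx
    linarith
  set f : ℝ → ℂ × ℂ := fun x => ((μ:ℂ) * v x, V1 x) with hfdef
  set f' : ℝ → ℂ × ℂ := fun x => ((μ:ℂ) * V1 x, V2 x) with hf'def
  have hfc : ContinuousOn f (Icc 0 1) :=
    (continuousOn_const.mul hv.continuousOn).prodMk hV1c.continuousOn
  have hf' : ∀ x ∈ Ico (0:ℝ) 1, HasDerivWithinAt f (f' x) (Ici x) x := by
    intro x hx
    have hxI : x ∈ Icc (0:ℝ) 1 := ⟨hx.1, le_of_lt hx.2⟩
    have hmem : Icc (0:ℝ) 1 ∈ 𝓝[Ici x] x := by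
      refine mem_nhdsWithin.mpr ⟨Iio 1, isOpen_Iio, hx.2, ?_⟩
      rintro y ⟨hy1, hy2⟩
      exact ⟨le_trans hx.1 hy2, le_of_lt hy1⟩
    have h1 : HasDerivWithinAt v (V1 x) (Icc 0 1) x :=
      ((hv.differentiableOn (by norm_num)) x hxI).hasDerivWithinAt
    have h2 : HasDerivWithinAt V1 (V2 x) (Icc 0 1) x :=
      ((hV1c.differentiableOn (by norm_num)) x hxI).hasDerivWithinAt
    exact (((h1.const_mul ((μ:ℝ):ℂ)).prodMk h2).mono_of_mem_nhdsWithin hmem)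
  have hf0 : ‖f 0‖ ≤ 1 := by
    have h0 : f 0 = (0, 1) := by
      rw [hfdef]; simp only [hv0, mul_zero]; rw [hv0']
    rw [h0, Prod.norm_def]
    simp
  have hmulnorm : ∀ z : ℂ, ‖(μ:ℂ) * z‖ = μ * ‖z‖ := by
    intro z; rw [norm_mul, Complex.norm_real, Real.norm_eq_abs, abs_of_pos hμ]
  have hbnd : ∀ x ∈ Ico (0:ℝ) 1, ‖f' x‖ ≤ μ * ‖f x‖ + 0 := by
    intro x hx
    have hxI : x ∈ Icc (0:ℝ) 1 := ⟨hx.1, le_of_lt hx.2⟩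
    rw [add_zero]
    have h1 : ‖f' x‖ = max (μ * ‖V1 x‖) ‖V2 x‖ := by
      rw [hf'def]; simp only [Prod.norm_def]; rw [hmulnorm]
    have h2 : ‖f x‖ = max (μ * ‖v x‖) ‖V1 x‖ := by
      rw [hfdef]; simp only [Prod.norm_def]; rw [hmulnorm]
    rw [h1, h2]
    apply max_le
    · exact mul_le_mul_of_nonneg_left (le_max_right _ _) hμ.le
    · refine le_trans (hbound x hxI) ?_
      have he : μ ^ 2 * ‖v x‖ = μ * (μ * ‖v x‖) := by ring
      rw [he]
      exact mul_le_mul_of_nonneg_left (le_max_left _ _) hμ.le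
  have hg := norm_le_gronwallBound_of_norm_deriv_right_le hfc hf' hf0 hbnd 1
    (right_mem_Icc.mpr zero_le_one)
  rw [gronwallBound_ε0] at hg
  have h3 : μ * ‖v 1‖ ≤ ‖f 1‖ := by
    have : ‖f 1‖ = max (μ * ‖v 1‖) ‖V1 1‖ := by
      rw [hfdef]; simp only [Prod.norm_def]; rw [hmulnorm]
    rw [this]; exact le_max_left _ _
  calc μ * ‖v 1‖ ≤ ‖f 1‖ := h3
    _ ≤ 1 * Real.exp (μ * (1 - 0)) := hg
    _ = Real.exp μ := by norm_num


lemma mono_aux (F F' : ℝ → ℝ) (z : ℝ) (hz : 0 < z) (hz1 : z ≤ 1)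
    (hF : ContinuousOn F (Icc 0 z))
    (hd : ∀ x ∈ Ioo (0:ℝ) z, HasDerivAt F (F' x) x)
    (h0 : ∀ x ∈ Ioo (0:ℝ) z, 0 ≤ F' x) :
    ∀ x ∈ Icc (0:ℝ) z, F 0 ≤ F x := by
  have hmono := monotoneOn_of_deriv_nonneg (convex_Icc 0 z) hF
    (by
      rw [interior_Icc]
      intro x hx
      exact (hd x hx).differentiableAt.differentiableWithinAt)
    (by
      rw [interior_Icc]
      intro x hx
      rw [(hd x hx).deriv]
      exact h0 x hx)
  intro x hx
  exact hmono (left_mem_Icc.mpr hz.le) hx hx.1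

lemma ode_lower {w Q : ℝ → ℝ} {m : ℝ} (hm : 1 ≤ m)
    (hw : ContDiffOn ℝ 2 w (Icc 0 1))
    (hode : ∀ x ∈ Ioo (0:ℝ) 1, deriv (deriv w) x = Q x * w x)
    (hQ : ∀ x ∈ Ioo (0:ℝ) 1, m ^ 2 ≤ Q x)
    (hw0 : w 0 = 0) (hw0' : derivWithin w (Icc 0 1) 0 = 1) :
    Real.exp m / (4 * m) ≤ w 1 := by
  have hm0 : 0 < m := lt_of_lt_of_le one_pos hm
  set W := derivWithin w (Icc 0 1) with hWdef
  have hW1c : ContDiffOn ℝ 1 W (Icc 0 1) := cd1_derivWithin hw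
  have hWc : ContinuousOn W (Icc 0 1) := hW1c.continuousOn
  have hwc : ContinuousOn w (Icc 0 1) := hw.continuousOn
  have hwd : ∀ x ∈ Ioo (0:ℝ) 1, HasDerivAt w (W x) x := fun x hx => hasDerivAt_of_cd2 hw hx
  have hWd : ∀ x ∈ Ioo (0:ℝ) 1, HasDerivAt W (Q x * w x) x := fun x hx => by
    have h := (D2 hw hx).1; rwa [hode x hx] at h
  -- positivity of w on [0,1]
  have hpos : ∀ c ∈ Icc (0:ℝ) 1, 0 ≤ w c := by
    by_contra hcon
    push_neg at hcon
    obtain ⟨c, hcI, hcneg⟩ := hcon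
    have hc0 : 0 < c := by
      rcases lt_or_eq_of_le hcI.1 with h | h
      · exact h
      · exfalso; rw [← h, hw0] at hcneg; exact lt_irrefl 0 hcneg
    have hev : ∀ᶠ y in 𝓝[Icc (0:ℝ) 1] 0, 1/2 < W y := by
      have h1 : Filter.Tendsto W (𝓝[Icc (0:ℝ) 1] 0) (𝓝 (1:ℝ)) := by
        have h2 := hWc 0 ⟨le_rfl, zero_le_one⟩
        rwa [ContinuousWithinAt, hw0'] at h2
      exact h1.eventually (eventually_gt_nhds (by norm_num))
    obtain ⟨ε, hε0, hball⟩ := Metric.mem_nhdsWithin_iff.mp hev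
    set d := min (ε/2) c with hddef
    have hd0 : 0 < d := lt_min (by linarith) hc0
    have hdc : d ≤ c := min_le_right _ _
    have hd1 : d ≤ 1 := le_trans hdc hcI.2
    have hWhalf : ∀ y ∈ Icc (0:ℝ) d, 1/2 ≤ W y := by
      intro y hy
      have hyI : y ∈ Icc (0:ℝ) 1 := ⟨hy.1, le_trans hy.2 hd1⟩
      have hyb : y ∈ Metric.ball (0:ℝ) ε := by
        rw [Metric.mem_ball, Real.dist_eq, sub_zero, abs_of_nonneg hy.1]
        exact lt_of_le_of_lt (le_trans hy.2 (min_le_left _ _)) (by linarith)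
      exact le_of_lt (hball ⟨hyb, hyI⟩)
    have hwd2 : ∀ x ∈ Icc (0:ℝ) d, x/2 ≤ w x := by
      have hmono := mono_aux (fun x => w x - x/2) (fun x => W x - 1/2) d hd0 hd1
        ((hwc.mono (Icc_subset_Icc le_rfl hd1)).sub (continuousOn_id.div_const _))
        (fun x hx => by
          have h1 := hwd x ⟨hx.1, lt_of_lt_of_le hx.2 hd1⟩
          have h2 : HasDerivAt (fun y : ℝ => y/2) (1/2 : ℝ) x := by
            simpa using (hasDerivAt_id x).div_const 2
          exact h1.sub h2)
        (fun x hx => by have := hWhalf x (Ioo_subset_Icc_self hx); linarith)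
      intro x hx
      have h := hmono x hx
      simp only [hw0] at h
      linarith
    have hcd : d < c := by
      rcases lt_or_ge d c with h | h
      · exact h
      · exfalso; have := hwd2 c ⟨hcI.1, h⟩; linarith
    set S := Icc d c ∩ w ⁻¹' (Iic 0) with hSdef
    have hsub : Icc d c ⊆ Icc (0:ℝ) 1 := Icc_subset_Icc hd0.le hcI.2
    have hSclosed : IsClosed S :=
      (hwc.mono hsub).preimage_isClosed_of_isClosed isClosed_Icc isClosed_Iic
    have hSne : S.Nonempty := ⟨c, ⟨hcd.le, le_rfl⟩, hcneg.le⟩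
    have hSbdd : BddBelow S := ⟨d, fun x hx => hx.1.1⟩
    set z := sInf S with hzdef
    have hzS : z ∈ S := hSclosed.csInf_mem hSne hSbdd
    have hzd : d ≤ z := hzS.1.1
    have hzc : z ≤ c := hzS.1.2
    have hz1 : z ≤ 1 := le_trans hzc hcI.2
    have hz0 : 0 < z := lt_of_lt_of_le hd0 hzd
    have hwz : w z ≤ 0 := hzS.2
    have hwpos : ∀ x, 0 < x → x < z → 0 < w x := by
      intro x hx0 hxz
      rcases le_or_gt x d with h | h
      · have := hwd2 x ⟨hx0.le, h⟩; linarith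
      · by_contra hneg
        push_neg at hneg
        have hxS : x ∈ S := ⟨⟨h.le, le_trans hxz.le hzc⟩, hneg⟩
        have h2 := csInf_le hSbdd hxS
        rw [← hzdef] at h2
        linarith
    have hWge : ∀ x ∈ Icc (0:ℝ) z, 1 ≤ W x := by
      have hmono := mono_aux W (fun x => Q x * w x) z hz0 hz1
        (hWc.mono (Icc_subset_Icc le_rfl hz1))
        (fun x hx => hWd x ⟨hx.1, lt_of_lt_of_le hx.2 hz1⟩)
        (fun x hx =>
          mul_nonneg (le_trans (by positivity) (hQ x ⟨hx.1, lt_of_lt_of_le hx.2 hz1⟩))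
            (hwpos x hx.1 hx.2).le)
      intro x hx
      have h := hmono x hx
      rwa [hw0'] at h
    have hwzge : z ≤ w z := by
      have hmono := mono_aux (fun x => w x - x) (fun x => W x - 1) z hz0 hz1
        ((hwc.mono (Icc_subset_Icc le_rfl hz1)).sub continuousOn_id)
        (fun x hx => (hwd x ⟨hx.1, lt_of_lt_of_le hx.2 hz1⟩).sub (hasDerivAt_id x))
        (fun x hx => by
          show (0:ℝ) ≤ W x - 1
          have := hWge x (Ioo_subset_Icc_self hx); linarith)
      have h := hmono z (right_mem_Icc.mpr hz0.le)
      simp only [hw0] at h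
      linarith
    linarith
  -- W ≥ 1 on [0,1]
  have hQ0 : ∀ x ∈ Ioo (0:ℝ) 1, 0 ≤ Q x := fun x hx => le_trans (by positivity) (hQ x hx)
  have hWge1 : ∀ x ∈ Icc (0:ℝ) 1, 1 ≤ W x := by
    have hmono := mono_aux W (fun x => Q x * w x) 1 one_pos le_rfl hWc hWd
      (fun x hx => mul_nonneg (hQ0 x hx) (hpos x (Ioo_subset_Icc_self hx)))
    intro x hx
    have h := hmono x hx
    rwa [hw0'] at h
  -- W + m w ≥ exp (m x)
  have hgge : ∀ x ∈ Icc (0:ℝ) 1, Real.exp (m*x) ≤ W x + m * w x := by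
    have hmono := mono_aux (fun x => Real.exp (-(m*x)) * (W x + m * w x))
      (fun x => Real.exp (-(m*x)) * (-m) * (W x + m * w x)
        + Real.exp (-(m*x)) * (Q x * w x + m * W x)) 1 one_pos le_rfl
      (by
        apply ContinuousOn.mul
        · exact (Real.continuous_exp.comp (continuous_const.mul continuous_id).neg).continuousOn
        · exact hWc.add (continuousOn_const.mul hwc))
      (fun x hx => by
        have hid : HasDerivAt (fun y : ℝ => -(m * y)) (-m) x := by
          simpa using (hasDerivAt_id x).const_mul (-m)
        have he : HasDerivAt (fun y => Real.exp (-(m*y))) (Real.exp (-(m*x)) * (-m)) x := hid.exp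
        have hg : HasDerivAt (fun y => W y + m * w y) (Q x * w x + m * W x) x :=
          (hWd x hx).add ((hwd x hx).const_mul m)
        exact he.mul hg)
      (fun x hx => by
        show (0:ℝ) ≤ Real.exp (-(m*x)) * (-m) * (W x + m * w x)
          + Real.exp (-(m*x)) * (Q x * w x + m * W x)
        have hxI : x ∈ Icc (0:ℝ) 1 := Ioo_subset_Icc_self hx
        have hkey : 0 ≤ Q x * w x - m^2 * w x :=
          sub_nonneg.mpr (mul_le_mul_of_nonneg_right (hQ x hx) (hpos x hxI))
        have hE : (0:ℝ) < Real.exp (-(m*x)) := Real.exp_pos _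
        have heq : Real.exp (-(m*x)) * (-m) * (W x + m * w x)
            + Real.exp (-(m*x)) * (Q x * w x + m * W x)
            = Real.exp (-(m*x)) * (Q x * w x - m^2 * w x) := by ring
        rw [heq]
        exact mul_nonneg hE.le hkey)
    intro x hx
    have h := hmono x hx
    simp only [hw0, hw0', mul_zero, neg_zero, Real.exp_zero, one_mul, add_zero] at h
    -- h : 1 ≤ exp (-(m*x)) * (W x + m * w x)
    have h2 : Real.exp (m*x) * 1 ≤ Real.exp (m*x) * (Real.exp (-(m*x)) * (W x + m * w x)) :=
      mul_le_mul_of_nonneg_left h (Real.exp_pos _).le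
    rwa [mul_one, ← mul_assoc, ← Real.exp_add, add_neg_cancel, Real.exp_zero, one_mul] at h2
  -- final integration
  have hF : ∀ x ∈ Icc (0:ℝ) 1,
      0 ≤ Real.exp (m*x) * w x - (Real.exp (2*m*x) - 1)/(2*m) := by
    have hmono := mono_aux (fun x => Real.exp (m*x) * w x - (Real.exp (2*m*x) - 1)/(2*m))
      (fun x => (Real.exp (m*x) * m * w x + Real.exp (m*x) * W x)
        - Real.exp (2*m*x) * (2*m)/(2*m)) 1 one_pos le_rfl
      (by
        apply ContinuousOn.sub
        · exact (Real.continuous_exp.comp (continuous_const.mul continuous_id)).continuousOn.mul hwc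
        · exact (((Real.continuous_exp.comp (continuous_const.mul continuous_id)).sub
            continuous_const).div_const _).continuousOn)
      (fun x hx => by
        have hid : HasDerivAt (fun y : ℝ => m * y) m x := by
          simpa using (hasDerivAt_id x).const_mul m
        have he1 : HasDerivAt (fun y => Real.exp (m*y)) (Real.exp (m*x) * m) x := hid.exp
        have hid2 : HasDerivAt (fun y : ℝ => 2*m*y) (2*m) x := by
          simpa using (hasDerivAt_id x).const_mul (2*m)
        have he2 : HasDerivAt (fun y => Real.exp (2*m*y)) (Real.exp (2*m*x) * (2*m)) x := hid2.exp
        exact (he1.mul (hwd x hx)).sub ((he2.sub_const 1).div_const (2*m)))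
      (fun x hx => by
        have hxI : x ∈ Icc (0:ℝ) 1 := Ioo_subset_Icc_self hx
        have h1 : Real.exp (m*x) * Real.exp (m*x) ≤ Real.exp (m*x) * (W x + m * w x) :=
          mul_le_mul_of_nonneg_left (hgge x hxI) (Real.exp_pos _).le
        have h2 : Real.exp (2*m*x) = Real.exp (m*x) * Real.exp (m*x) := by
          rw [← Real.exp_add]; ring_nf
        have h3 : Real.exp (2*m*x) * (2*m)/(2*m) = Real.exp (2*m*x) := by
          field_simp
        show (0:ℝ) ≤ Real.exp (m*x) * m * w x + Real.exp (m*x) * W x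
          - Real.exp (2*m*x) * (2*m)/(2*m)
        rw [h3]
        nlinarith [h1, h2])
    intro x hx
    have h := hmono x hx
    simp only [hw0, mul_zero, Real.exp_zero, sub_self, zero_div, one_mul, zero_sub] at h
    -- h : 0 - 0 ≤ ... hopefully simplified; just conclude with linarith
    have h0 : Real.exp (m*0) * w 0 - (Real.exp (2*m*0) - 1)/(2*m) = 0 := by
      simp [hw0]
    linarith [hmono x hx, h0.symm.le]
  have hfin := hF 1 (right_mem_Icc.mpr zero_le_one)
  have hE : (2:ℝ) ≤ Real.exp m := by
    have := Real.add_one_le_exp m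
    linarith
  have hE2 : Real.exp (2*m) = Real.exp m * Real.exp m := by
    rw [← Real.exp_add]; ring_nf
  have hdiv : (Real.exp (2*m) - 1)/(2*m) ≤ 2*m*(Real.exp m * w 1) / (2*m) := by
    rw [mul_one] at hfin
    have : (Real.exp (2*m) - 1)/(2*m) ≤ Real.exp m * w 1 := by
      simp only [mul_one] at hfin ⊢
      linarith
    calc (Real.exp (2*m) - 1)/(2*m) ≤ Real.exp m * w 1 := this
      _ = 2*m*(Real.exp m * w 1) / (2*m) := by field_simp
  have hmul : Real.exp (2*m) - 1 ≤ 2*m*(Real.exp m * w 1) := by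
    have h2m : (0:ℝ) < 2*m := by linarith
    have := (div_le_div_iff_of_pos_right h2m).mp hdiv
    linarith [this]
  rw [div_le_iff₀ (by linarith : (0:ℝ) < 4*m)]
  nlinarith [hmul, hE, hE2, hm0, Real.exp_pos m]


lemma re_transfer {v : ℝ → ℂ} {Q : ℝ → ℝ} (hv : ContDiffOn ℝ 2 v (Icc 0 1))
    (hode : ∀ x ∈ Ioo (0:ℝ) 1, deriv (deriv v) x = (Q x : ℂ) * v x)
    (hv0 : v 0 = 0) (hv0' : derivWithin v (Icc 0 1) 0 = 1) :
    ContDiffOn ℝ 2 (fun x => (v x).re) (Icc 0 1) ∧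
    (∀ x ∈ Ioo (0:ℝ) 1, deriv (deriv (fun x => (v x).re)) x = Q x * (v x).re) ∧
    (fun x => (v x).re) 0 = 0 ∧ derivWithin (fun x => (v x).re) (Icc 0 1) 0 = 1 := by
  have hre : (fun x => (v x).re) = Complex.reCLM ∘ v := rfl
  refine ⟨?_, ?_, ?_, ?_⟩
  · rw [hre]
    exact Complex.reCLM.contDiff.comp_contDiffOn hv
  · intro x hx
    set V1 := derivWithin v (Icc 0 1) with hV1def
    -- deriv of re ∘ v equals re ∘ V1 on Ioo
    have hdw : ∀ y ∈ Ioo (0:ℝ) 1, deriv (fun x => (v x).re) y = (V1 y).re := by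
      intro y hy
      have h1 : HasDerivAt v (V1 y) y := hasDerivAt_of_cd2 hv hy
      have h2 : HasDerivAt (Complex.reCLM ∘ v) (Complex.reCLM (V1 y)) y :=
        Complex.reCLM.hasFDerivAt.comp_hasDerivAt y h1
      rw [hre]
      exact h2.deriv
    have heq : deriv (fun x => (v x).re) =ᶠ[𝓝 x] fun y => (V1 y).re := by
      filter_upwards [Ioo_mem_nhds hx.1 hx.2] with y hy
      exact hdw y hy
    have h3 : HasDerivAt V1 (deriv (deriv v) x) x := (D2 hv hx).1
    have h4 : HasDerivAt (fun y => (V1 y).re) ((deriv (deriv v) x).re) x :=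
      Complex.reCLM.hasFDerivAt.comp_hasDerivAt x h3
    have h5 : deriv (deriv (fun x => (v x).re)) x = (deriv (deriv v) x).re := by
      rw [heq.deriv_eq, h4.deriv]
    rw [h5, hode x hx]
    simp [Complex.mul_re]
  · simp [hv0]
  · have h1 : HasDerivWithinAt v (derivWithin v (Icc 0 1) 0) (Icc 0 1) 0 :=
      ((hv.differentiableOn (by norm_num)) 0 ⟨le_rfl, zero_le_one⟩).hasDerivWithinAt
    rw [hv0'] at h1
    have h2 : HasDerivWithinAt (Complex.reCLM ∘ v) (Complex.reCLM 1) (Icc 0 1) 0 :=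
      Complex.reCLM.hasFDerivAt.comp_hasDerivWithinAt 0 h1
    rw [hre]
    rw [h2.derivWithin (uD 0 ⟨le_rfl, zero_le_one⟩)]
    simp


lemma factor_zeros (S : Finset ℂ) : ∀ (f : ℂ → ℂ), Differentiable ℂ f → (∀ a ∈ S, f a = 0) →
    ∃ g : ℂ → ℂ, Differentiable ℂ g ∧ ∀ z, f z = (∏ a ∈ S, (z - a)) * g z := by
  classical
  induction S using Finset.induction_on with
  | empty => exact fun f hf _ => ⟨f, hf, fun z => by simp⟩
  | @insert a S ha ih =>
    intro f hf hS
    have hfa : f a = 0 := hS a (Finset.mem_insert_self a S)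
    have hkey : ∀ z, f z = (z - a) * dslope f a z := by
      intro z
      rcases eq_or_ne z a with rfl | hz
      · simp [hfa]
      · rw [dslope_of_ne f hz, slope_def_field, hfa, sub_zero, mul_comm,
          div_mul_cancel₀ _ (sub_ne_zero.mpr hz)]
    have hd : Differentiable ℂ (dslope f a) := by
      rw [← differentiableOn_univ] at hf ⊢
      rwa [Complex.differentiableOn_dslope (Filter.univ_mem)]
    have hz' : ∀ b ∈ S, dslope f a b = 0 := by
      intro b hb
      have hba : b ≠ a := fun h => ha (h ▸ hb)
      rw [dslope_of_ne f hba, slope_def_field, hfa, sub_zero,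
        hS b (Finset.mem_insert_of_mem hb), zero_div]
    obtain ⟨g, hg, hfac⟩ := ih (dslope f a) hd hz'
    refine ⟨g, hg, fun z => ?_⟩
    rw [Finset.prod_insert ha, hkey z, hfac z]
    ring

lemma count_zeros (f : ℂ → ℂ) (hf : Differentiable ℂ f) (z₀ : ℂ) (s : ℝ) (hs : 0 < s)
    (M : ℝ) (hM : ∀ z ∈ Metric.sphere z₀ (4*s), ‖f z‖ ≤ M)
    (S : Finset ℂ) (hzero : ∀ z ∈ S, f z = 0) (hin : ∀ z ∈ S, z ∈ Metric.closedBall z₀ s) :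
    ‖f z₀‖ * 3 ^ S.card ≤ M := by
  obtain ⟨g, hg, hfac⟩ := factor_zeros S f hf hzero
  set n := S.card with hndef
  have hprod_lower : ∀ z ∈ Metric.sphere z₀ (4*s), (3*s)^n ≤ ‖∏ a ∈ S, (z - a)‖ := by
    intro z hz
    rw [norm_prod]
    have h1 : (3*s)^n = ∏ _a ∈ S, (3*s) := by rw [Finset.prod_const, hndef]
    rw [h1]
    refine Finset.prod_le_prod (fun a _ => by positivity) (fun a haS => ?_)
    have hd1 : dist z z₀ = 4*s := Metric.mem_sphere.mp hz
    have hd2 : dist a z₀ ≤ s := Metric.mem_closedBall.mp (hin a haS)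
    have htri : dist z z₀ ≤ dist z a + dist a z₀ := dist_triangle z a z₀
    have : ‖z - a‖ = dist z a := (dist_eq_norm z a).symm
    rw [this]
    linarith
  have hgbound : ∀ z ∈ Metric.sphere z₀ (4*s), ‖g z‖ ≤ M / (3*s)^n := by
    intro z hz
    have h3s : (0:ℝ) < (3*s)^n := by positivity
    rw [le_div_iff₀ h3s]
    calc ‖g z‖ * (3*s)^n ≤ ‖g z‖ * ‖∏ a ∈ S, (z-a)‖ :=
          mul_le_mul_of_nonneg_left (hprod_lower z hz) (norm_nonneg _)
      _ = ‖f z‖ := by rw [mul_comm, ← norm_mul, ← hfac z]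
      _ ≤ M := hM z hz
  have h4s : (4*s) ≠ 0 := by positivity
  have hgz₀ : ‖g z₀‖ ≤ M / (3*s)^n := by
    refine Complex.norm_le_of_forall_mem_frontier_norm_le (U := Metric.ball z₀ (4*s))
      Metric.isBounded_ball hg.diffContOnCl ?_ ?_
    · rw [frontier_ball z₀ h4s]
      exact hgbound
    · rw [closure_ball z₀ h4s]
      exact Metric.mem_closedBall_self (by positivity)
  have hPz₀ : ‖∏ a ∈ S, (z₀ - a)‖ ≤ s^n := by
    rw [norm_prod]
    have h1 : s^n = ∏ _a ∈ S, s := by rw [Finset.prod_const, hndef]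
    rw [h1]
    refine Finset.prod_le_prod (fun a _ => norm_nonneg _) (fun a haS => ?_)
    have hd2 : dist a z₀ ≤ s := Metric.mem_closedBall.mp (hin a haS)
    have : ‖z₀ - a‖ = dist z₀ a := (dist_eq_norm z₀ a).symm
    rw [this, dist_comm]
    exact hd2
  have hM0 : 0 ≤ M / (3*s)^n := le_trans (norm_nonneg _) (hgz₀)
  calc ‖f z₀‖ * 3^n = ‖∏ a ∈ S, (z₀-a)‖ * ‖g z₀‖ * 3^n := by rw [← norm_mul, ← hfac z₀]
    _ ≤ s^n * (M/(3*s)^n) * 3^n := by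
        refine mul_le_mul_of_nonneg_right ?_ (by positivity)
        exact mul_le_mul hPz₀ hgz₀ (norm_nonneg _) (by positivity)
    _ = M := by
        rw [mul_pow]
        field_simp

end G0Aux

open Set Filter Topology G0Aux

set_option maxHeartbeats 1600000 in
/-- for real-valued `a ∈ C²[0,1]`, `b ∈ C¹[0,1]`, let `u(·,λ)` solve
`u'' − (λ² + 2λa − b)u = 0` with `u(0,λ) = 0`, `u'(0,λ) = 1`, and let the entire
function `γ₀` be `γ₀(λ) = u(1,λ)`. Then `|γ₀(λ)| ≤ C|λ|^{−1}e^{|λ|}` for large `|λ|`;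
consequently `γ₀` has order one (growth of order `≤ 1 + ε` for every `ε > 0`, but not
of any order `ρ < 1`), and the series `Σ |λ_n|^{−2}` over its nonzero zeros
converges, so the genus of the associated canonical product is one. -/
theorem gamma0_growth_order_one (a b : ℝ → ℝ)
    (ha : ContDiffOn ℝ 2 a (Set.Icc 0 1))
    (hb : ContDiffOn ℝ 1 b (Set.Icc 0 1))
    (u : ℂ → ℝ → ℂ) (γ : ℂ → ℂ)
    (hu_smooth : ∀ l : ℂ, ContDiffOn ℝ 2 (u l) (Set.Icc 0 1))
    (hu_ode : ∀ l : ℂ, ∀ x ∈ Set.Ioo (0:ℝ) 1,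
      deriv (deriv (u l)) x = (l ^ 2 + 2 * l * (a x : ℂ) - (b x : ℂ)) * u l x)
    (hu0 : ∀ l : ℂ, u l 0 = 0)
    (hu0' : ∀ l : ℂ, derivWithin (u l) (Set.Icc 0 1) 0 = 1)
    (hγ : ∀ l : ℂ, γ l = u l 1)
    (hγ_entire : Differentiable ℂ γ) :
    -- the growth estimate |γ₀(λ)| ≤ C |λ|⁻¹ e^{|λ|} for large |λ|
    (∃ C R : ℝ, 0 < C ∧ 0 < R ∧ ∀ l : ℂ, R ≤ ‖l‖ →
      ‖γ l‖ ≤ C * ‖l‖⁻¹ * Real.exp ‖l‖) ∧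
    -- γ₀ has order at most one …
    (∀ ε : ℝ, 0 < ε → ∃ C : ℝ, ∀ l : ℂ, ‖γ l‖ ≤ C * Real.exp (‖l‖ ^ (1 + ε))) ∧
    -- … and order at least one, i.e. the order is exactly one
    (∀ ρ : ℝ, ρ < 1 → ¬ ∃ C : ℝ, ∀ l : ℂ, ‖γ l‖ ≤ C * Real.exp (‖l‖ ^ ρ)) ∧
    -- Σ |λ_n|^{−2} over the nonzero zeros of γ₀ converges
    (∀ Λ : ℕ → ℂ, Function.Injective Λ → (∀ n : ℕ, γ (Λ n) = 0 ∧ Λ n ≠ 0) →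
      Summable (fun n : ℕ => ‖Λ n‖ ^ (-2 : ℤ))) := by
  classical
  -- bounds for a and b
  obtain ⟨A₀, hA₀⟩ := isCompact_Icc.exists_bound_of_continuousOn ha.continuousOn
  obtain ⟨B₀, hB₀⟩ := isCompact_Icc.exists_bound_of_continuousOn hb.continuousOn
  set A := max A₀ 0 with hAdef
  set B := max B₀ 0 with hBdef
  have hA0 : 0 ≤ A := le_max_right _ _
  have hB0 : 0 ≤ B := le_max_right _ _
  have hA : ∀ x ∈ Set.Icc (0:ℝ) 1, |a x| ≤ A := fun x hx =>
    le_trans (le_of_eq (Real.norm_eq_abs _).symm) (le_trans (hA₀ x hx) (le_max_left _ _))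
  have hB : ∀ x ∈ Set.Icc (0:ℝ) 1, |b x| ≤ B := fun x hx =>
    le_trans (le_of_eq (Real.norm_eq_abs _).symm) (le_trans (hB₀ x hx) (le_max_left _ _))
  set K := max A (Real.sqrt B) + 1 with hKdef
  have hmax0 : 0 ≤ max A (Real.sqrt B) := le_trans hA0 (le_max_left _ _)
  have hK1 : 1 ≤ K := by rw [hKdef]; linarith
  have hK0 : 0 < K := by linarith
  have hKA : A ≤ K := by
    have := le_max_left A (Real.sqrt B); rw [hKdef]; linarith
  have hKB : B ≤ K^2 := by
    have h1 : Real.sqrt B ≤ K := by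
      have := le_max_right A (Real.sqrt B); rw [hKdef]; linarith
    have h2 : Real.sqrt B ^ 2 = B := Real.sq_sqrt hB0
    nlinarith [Real.sqrt_nonneg B]
  -- THE UPPER BOUND
  have upper1 : ∀ l : ℂ, 1 ≤ ‖l‖ → ‖γ l‖ ≤ Real.exp K * ‖l‖⁻¹ * Real.exp ‖l‖ := by
    intro l hl
    have hl0 : (0:ℝ) < ‖l‖ := lt_of_lt_of_le one_pos hl
    set μ := ‖l‖ + K with hμdef
    have hμ0 : 0 < μ := by rw [hμdef]; linarith
    have hqb : ∀ x ∈ Set.Ioo (0:ℝ) 1, ‖l^2 + 2*l*(a x:ℂ) - (b x:ℂ)‖ ≤ μ^2 := by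
      intro x hx
      have hxI := Set.Ioo_subset_Icc_self hx
      have h1 : ‖l^2 + 2*l*(a x:ℂ) - (b x:ℂ)‖ ≤ ‖l‖^2 + 2*‖l‖*|a x| + |b x| := by
        calc ‖l^2 + 2*l*(a x:ℂ) - (b x:ℂ)‖
            ≤ ‖l^2 + 2*l*(a x:ℂ)‖ + ‖((b x:ℝ):ℂ)‖ := norm_sub_le _ _
          _ ≤ ‖l^2‖ + ‖2*l*((a x:ℝ):ℂ)‖ + ‖((b x:ℝ):ℂ)‖ := by
              linarith [norm_add_le (l^2) (2*l*((a x:ℝ):ℂ))]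
          _ = ‖l‖^2 + 2*‖l‖*|a x| + |b x| := by
              rw [norm_pow, norm_mul, norm_mul, Complex.norm_real, Complex.norm_real]
              simp [Real.norm_eq_abs]
              try ring
      have ha' := hA x hxI
      have hb' := hB x hxI
      have h2 : ‖l‖^2 + 2*‖l‖*|a x| + |b x| ≤ μ^2 := by
        rw [hμdef]
        nlinarith [hl0.le, abs_nonneg (a x), abs_nonneg (b x)]
      linarith
    have hg := gronwall_upper hμ0 (hu_smooth l) (fun x hx => hu_ode l x hx) hqb (hu0 l) (hu0' l)
    rw [hγ l]
    have hexp : Real.exp μ = Real.exp K * Real.exp ‖l‖ := by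
      rw [← Real.exp_add, hμdef]; ring_nf
    have h3 : ‖l‖ * ‖u l 1‖ ≤ μ * ‖u l 1‖ :=
      mul_le_mul_of_nonneg_right (by rw [hμdef]; linarith) (norm_nonneg _)
    have h4 : ‖l‖ * ‖u l 1‖ ≤ Real.exp K * Real.exp ‖l‖ := by
      rw [← hexp]; linarith
    have h5 : ‖u l 1‖ ≤ (Real.exp K * Real.exp ‖l‖) / ‖l‖ := by
      rw [le_div_iff₀ hl0]; nlinarith [h4]
    calc ‖u l 1‖ ≤ (Real.exp K * Real.exp ‖l‖)/‖l‖ := h5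
      _ = Real.exp K * ‖l‖⁻¹ * Real.exp ‖l‖ := by field_simp
  -- THE LOWER BOUND along the positive real axis
  set Λ₁ := max 2 (max (8*A) (2*Real.sqrt B)) with hΛdef
  have hΛ2 : 2 ≤ Λ₁ := le_max_left _ _
  have lower : ∀ t : ℝ, Λ₁ ≤ t → Real.exp (t/2)/(2*t) ≤ ‖γ (t:ℂ)‖ := by
    intro t ht
    have ht2 : 2 ≤ t := le_trans hΛ2 ht
    have ht0 : 0 < t := by linarith
    have h8A : 8*A ≤ t := le_trans (le_trans (le_max_left _ _) (le_max_right _ _)) ht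
    have h2sB : 2*Real.sqrt B ≤ t := le_trans (le_trans (le_max_right _ _) (le_max_right _ _)) ht
    have hm : 1 ≤ t/2 := by linarith
    have hQlb : ∀ x ∈ Set.Ioo (0:ℝ) 1, (t/2)^2 ≤ t^2 + 2*t*(a x) - b x := by
      intro x hx
      have hxI := Set.Ioo_subset_Icc_self hx
      have ha' := abs_le.mp (hA x hxI)
      have hb' := abs_le.mp (hB x hxI)
      have hB4 : B ≤ t^2/4 := by nlinarith [Real.sq_sqrt hB0, Real.sqrt_nonneg B]
      nlinarith [ha'.1, hb'.2, hA0]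
    have hodeQ : ∀ x ∈ Set.Ioo (0:ℝ) 1,
        deriv (deriv (u (t:ℂ))) x = ((t^2 + 2*t*(a x) - b x : ℝ):ℂ) * u t x := by
      intro x hx
      rw [hu_ode t x hx]
      push_cast
      try ring_nf
    obtain ⟨hwsm, hwode, hw0, hw0'⟩ := re_transfer (hu_smooth t) hodeQ (hu0 t) (hu0' t)
    have hlow := ode_lower hm hwsm hwode hQlb hw0 hw0'
    have h1 : (u (t:ℂ) 1).re ≤ ‖γ (t:ℂ)‖ := by
      rw [hγ]
      exact le_trans (le_abs_self _) (Complex.abs_re_le_norm _)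
    have h2 : (4:ℝ)*(t/2) = 2*t := by ring
    rw [h2] at hlow
    exact le_trans hlow h1
  refine ⟨⟨Real.exp K, 1, Real.exp_pos K, one_pos, fun l hl => upper1 l hl⟩, ?_, ?_, ?_⟩
  · -- order at most 1 + ε
    intro ε hε
    obtain ⟨C₁, hC₁⟩ := (isCompact_closedBall (0:ℂ) 1).exists_bound_of_continuousOn
      hγ_entire.continuous.continuousOn
    refine ⟨max C₁ (Real.exp K), fun l => ?_⟩
    have hC₂pos : 0 < max C₁ (Real.exp K) := lt_of_lt_of_le (Real.exp_pos K) (le_max_right _ _)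
    have hexp1 : 1 ≤ Real.exp (‖l‖^((1:ℝ)+ε)) :=
      Real.one_le_exp (Real.rpow_nonneg (norm_nonneg l) _)
    rcases le_or_gt ‖l‖ 1 with h | h
    · have h1 : ‖γ l‖ ≤ C₁ := hC₁ l (mem_closedBall_zero_iff.mpr h)
      calc ‖γ l‖ ≤ C₁ := h1
        _ ≤ max C₁ (Real.exp K) := le_max_left _ _
        _ = max C₁ (Real.exp K) * 1 := (mul_one _).symm
        _ ≤ max C₁ (Real.exp K) * Real.exp (‖l‖^((1:ℝ)+ε)) :=
            mul_le_mul_of_nonneg_left hexp1 hC₂pos.le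
    · have h1 := upper1 l h.le
      have hl0 : (0:ℝ) < ‖l‖ := by linarith
      have hinv : ‖l‖⁻¹ ≤ 1 := by
        rw [inv_le_one_iff₀]
        right; exact h.le
      have hee : Real.exp ‖l‖ ≤ Real.exp (‖l‖^((1:ℝ)+ε)) := by
        apply Real.exp_le_exp.mpr
        calc ‖l‖ = ‖l‖^((1:ℝ)) := (Real.rpow_one _).symm
          _ ≤ ‖l‖^((1:ℝ)+ε) := Real.rpow_le_rpow_of_exponent_le h.le (by linarith)
      calc ‖γ l‖ ≤ Real.exp K * ‖l‖⁻¹ * Real.exp ‖l‖ := h1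
        _ ≤ Real.exp K * 1 * Real.exp (‖l‖^((1:ℝ)+ε)) := by
            apply mul_le_mul (mul_le_mul_of_nonneg_left hinv (Real.exp_pos K).le) hee
              (Real.exp_pos _).le (by positivity)
        _ ≤ max C₁ (Real.exp K) * Real.exp (‖l‖^((1:ℝ)+ε)) := by
            rw [mul_one]
            exact mul_le_mul_of_nonneg_right (le_max_right _ _) (Real.exp_pos _).le
  · -- order at least 1
    rintro ρ hρ ⟨C, hC⟩
    set ρ' := max ρ (1/2) with hρ'def
    have hρ'1 : ρ' < 1 := max_lt hρ (by norm_num)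
    have hρ'2 : (0:ℝ) < 1 - ρ' := by linarith
    set C' := max C 1 with hC'def
    have hC'1 : (1:ℝ) ≤ C' := le_max_right _ _
    have hev1 : ∀ᶠ t in atTop, Real.log t ≤ t/8 := by
      have h := Real.isLittleO_log_id_atTop.def (by norm_num : (0:ℝ) < 1/8)
      filter_upwards [h, eventually_ge_atTop (1:ℝ)] with t h1 h2
      have h3 : |Real.log t| ≤ (1/8)*|t| := by
        simpa [Real.norm_eq_abs] using h1
      have h4 : Real.log t ≤ |Real.log t| := le_abs_self _
      rw [abs_of_nonneg (by linarith : (0:ℝ) ≤ t)] at h3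
      linarith
    have hev2 : ∀ᶠ t : ℝ in atTop, t^ρ' ≤ t/8 := by
      have h' := (tendsto_rpow_neg_atTop hρ'2).eventually
        (eventually_lt_nhds (by norm_num : (0:ℝ) < 1/8))
      filter_upwards [h', eventually_ge_atTop (1:ℝ)] with t h1 h2
      have ht0 : (0:ℝ) < t := by linarith
      rw [show -(1-ρ') = ρ' - 1 by ring] at h1
      rw [Real.rpow_sub ht0, Real.rpow_one] at h1
      have h3 := (div_lt_iff₀ ht0).mp h1
      linarith
    have hev3 : ∀ᶠ t in atTop, Real.log 2 + Real.log C' + 1 ≤ t/8 := by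
      filter_upwards [eventually_ge_atTop (8*(Real.log 2 + Real.log C' + 1))] with t h1
      linarith
    obtain ⟨t, h1, h2, h3, h4, h5⟩ :=
      (hev1.and (hev2.and (hev3.and ((eventually_ge_atTop Λ₁).and
        (eventually_ge_atTop (1:ℝ)))))).exists
    have ht0 : (0:ℝ) < t := by linarith
    have hlow := lower t h4
    have hup := hC (t:ℂ)
    have hnorm : ‖((t:ℝ):ℂ)‖ = t := by
      rw [Complex.norm_real, Real.norm_eq_abs, abs_of_pos ht0]
    rw [hnorm] at hup
    have hC'0 : (0:ℝ) < C' := by linarith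
    have hle1 : C * Real.exp (t^ρ) ≤ C' * Real.exp (t^ρ') := by
      apply mul_le_mul (le_max_left _ _)
        (Real.exp_le_exp.mpr (Real.rpow_le_rpow_of_exponent_le h5 (le_max_left _ _)))
        (Real.exp_pos _).le (by linarith)
    have hkey : 2*t*(C' * Real.exp (t^ρ')) < Real.exp (t/2) := by
      have hlogsum : Real.log 2 + Real.log t + Real.log C' + t^ρ' < t/2 := by linarith
      have hid : 2*t*C' = Real.exp (Real.log 2 + Real.log t + Real.log C') := by
        rw [Real.exp_add, Real.exp_add, Real.exp_log two_pos, Real.exp_log ht0,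
          Real.exp_log hC'0]
      calc 2*t*(C'*Real.exp (t^ρ'))
          = Real.exp (Real.log 2 + Real.log t + Real.log C' + t^ρ') := by
            rw [Real.exp_add, ← hid]; ring
        _ < Real.exp (t/2) := Real.exp_lt_exp.mpr hlogsum
    have hfinal : Real.exp (t/2)/(2*t) ≤ C' * Real.exp (t^ρ') :=
      le_trans hlow (le_trans hup hle1)
    have h2t : (0:ℝ) < 2*t := by linarith
    rw [div_le_iff₀ h2t] at hfinal
    nlinarith [hkey, hfinal]
  · -- summability of the zeros
    intro Λ hinj hzeros
    obtain ⟨C₁, hC₁⟩ := (isCompact_closedBall (0:ℂ) 1).exists_bound_of_continuousOn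
      hγ_entire.continuous.continuousOn
    set C₃ := max C₁ (Real.exp K) with hC₃def
    have hC₃pos : 0 < C₃ := lt_of_lt_of_le (Real.exp_pos K) (le_max_right _ _)
    have hglob : ∀ l : ℂ, ‖γ l‖ ≤ C₃ * Real.exp ‖l‖ := by
      intro l
      have hexp1 : 1 ≤ Real.exp ‖l‖ := Real.one_le_exp (norm_nonneg l)
      rcases le_or_gt ‖l‖ 1 with h | h
      · calc ‖γ l‖ ≤ C₁ := hC₁ l (mem_closedBall_zero_iff.mpr h)
          _ ≤ C₃ := le_max_left _ _
          _ = C₃ * 1 := (mul_one _).symm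
          _ ≤ C₃ * Real.exp ‖l‖ := mul_le_mul_of_nonneg_left hexp1 hC₃pos.le
      · have h1 := upper1 l h.le
        have hl0 : (0:ℝ) < ‖l‖ := by linarith
        have hinv : ‖l‖⁻¹ ≤ 1 := by
          rw [inv_le_one_iff₀]; right; exact h.le
        calc ‖γ l‖ ≤ Real.exp K * ‖l‖⁻¹ * Real.exp ‖l‖ := h1
          _ ≤ Real.exp K * 1 * Real.exp ‖l‖ := by
              apply mul_le_mul_of_nonneg_right
                (mul_le_mul_of_nonneg_left hinv (Real.exp_pos K).le) (Real.exp_pos _).le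
          _ ≤ C₃ * Real.exp ‖l‖ := by
              rw [mul_one]
              exact mul_le_mul_of_nonneg_right (le_max_right _ _) (Real.exp_pos _).le
    -- base point with γ(z₀) bounded below
    set t₀ := max Λ₁ 1 with ht₀def
    have ht₀1 : (1:ℝ) ≤ t₀ := le_max_right _ _
    have ht₀0 : (0:ℝ) < t₀ := lt_of_lt_of_le one_pos ht₀1
    set z₀ : ℂ := ((t₀:ℝ):ℂ) with hz₀def
    have hz₀norm : ‖z₀‖ = t₀ := by
      rw [hz₀def, Complex.norm_real, Real.norm_eq_abs, abs_of_pos ht₀0]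
    set m₀ := Real.exp (t₀/2)/(2*t₀) with hm₀def
    have hm₀pos : 0 < m₀ := by rw [hm₀def]; positivity
    have hm₀le : m₀ ≤ ‖γ z₀‖ := lower t₀ (le_max_left _ _)
    -- zero counting estimate
    set D := max (Real.log C₃ - Real.log m₀) 0 + 5*t₀ + 4 with hDdef
    have hmaxD0 : (0:ℝ) ≤ max (Real.log C₃ - Real.log m₀) 0 := le_max_right _ _
    have hD0 : 0 < D := by rw [hDdef]; linarith
    have hcount : ∀ s : ℝ, 1 ≤ s → ∀ S : Finset ℂ,
        (∀ z ∈ S, γ z = 0) → (∀ z ∈ S, ‖z‖ ≤ s) → (S.card : ℝ) ≤ D * s := by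
      intro s hs S hSz hSn
      set s' := s + t₀ with hs'def
      have hs'0 : (0:ℝ) < s' := by rw [hs'def]; linarith
      have hM : ∀ z ∈ Metric.sphere z₀ (4*s'), ‖γ z‖ ≤ C₃ * Real.exp (t₀ + 4*s') := by
        intro z hz
        have hd : dist z z₀ = 4*s' := Metric.mem_sphere.mp hz
        have h1 : ‖z‖ ≤ t₀ + 4*s' := by
          have h2 : ‖z‖ ≤ ‖z - z₀‖ + ‖z₀‖ := by
            calc ‖z‖ = ‖z - z₀ + z₀‖ := by rw [sub_add_cancel]
              _ ≤ ‖z - z₀‖ + ‖z₀‖ := norm_add_le _ _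
          rw [hz₀norm, ← dist_eq_norm, hd] at h2
          linarith
        exact le_trans (hglob z)
          (mul_le_mul_of_nonneg_left (Real.exp_le_exp.mpr h1) hC₃pos.le)
      have hin : ∀ z ∈ S, z ∈ Metric.closedBall z₀ s' := by
        intro z hzS
        rw [Metric.mem_closedBall, dist_eq_norm]
        calc ‖z - z₀‖ ≤ ‖z‖ + ‖z₀‖ := norm_sub_le _ _
          _ ≤ s + t₀ := by rw [hz₀norm]; exact add_le_add (hSn z hzS) le_rfl
      have hcz := count_zeros γ hγ_entire z₀ s' hs'0 _ hM S hSz hin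
      have h3pow : (0:ℝ) < 3^S.card := by positivity
      have h2 : m₀ * 3^S.card ≤ C₃ * Real.exp (t₀ + 4*s') :=
        le_trans (mul_le_mul_of_nonneg_right hm₀le (by positivity)) hcz
      have hlog : Real.log m₀ + (S.card : ℝ) * Real.log 3 ≤ Real.log C₃ + (t₀ + 4*s') := by
        have hl := Real.log_le_log (by positivity) h2
        rw [Real.log_mul (ne_of_gt hm₀pos) (ne_of_gt h3pow), Real.log_pow,
          Real.log_mul (ne_of_gt hC₃pos) (Real.exp_ne_zero _), Real.log_exp] at hl
        exact_mod_cast hl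
      have hlog3 : 1 ≤ Real.log 3 := by
        rw [Real.le_log_iff_exp_le (by norm_num : (0:ℝ) < 3)]
        exact le_trans Real.exp_one_lt_d9.le (by norm_num)
      have hcard1 : (S.card : ℝ) ≤ Real.log C₃ - Real.log m₀ + t₀ + 4*s' := by
        have h4 : (S.card:ℝ) * 1 ≤ (S.card:ℝ) * Real.log 3 :=
          mul_le_mul_of_nonneg_left hlog3 (Nat.cast_nonneg _)
        linarith
      have hle : Real.log C₃ - Real.log m₀ + t₀ + 4*(s+t₀) ≤ D*s := by
        have h5 : Real.log C₃ - Real.log m₀ ≤ max (Real.log C₃ - Real.log m₀) 0 :=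
          le_max_left _ _
        rw [hDdef]
        nlinarith [ht₀0, hs, hmaxD0]
      rw [hs'def] at hcard1
      linarith
    -- transfer to index sets
    have hr0 : ∀ n, 0 < ‖Λ n‖ := fun n => norm_pos_iff.mpr (hzeros n).2
    have hcardN : ∀ s : ℝ, 1 ≤ s → ∀ un : Finset ℕ,
        (∀ n ∈ un, ‖Λ n‖ ≤ s) → (un.card : ℝ) ≤ D * s := by
      intro s hs un hun
      have h1 : (un.image Λ).card = un.card := Finset.card_image_of_injective un hinj
      have h2 := hcount s hs (un.image Λ)
        (by intro z hz; obtain ⟨n, hn, rfl⟩ := Finset.mem_image.mp hz; exact (hzeros n).1)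
        (by intro z hz; obtain ⟨n, hn, rfl⟩ := Finset.mem_image.mp hz; exact hun n hn)
      rw [h1] at h2
      exact h2
    -- only finitely many small zeros
    have hGfin : {n : ℕ | ‖Λ n‖ ≤ 1}.Finite := by
      by_contra hinf
      have hinf' : Set.Infinite {n : ℕ | ‖Λ n‖ ≤ 1} := hinf
      obtain ⟨tset, htsub, htcard⟩ := hinf'.exists_subset_card_eq (⌈D⌉₊ + 1)
      have h1 := hcardN 1 le_rfl tset (fun n hn => htsub hn)
      rw [htcard, mul_one] at h1
      have h2 : D ≤ (⌈D⌉₊ : ℝ) := Nat.le_ceil D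
      push_cast at h1
      linarith
    set cs := ∑ n ∈ hGfin.toFinset, ‖Λ n‖^(-2:ℤ) with hcsdef
    have hterm_nonneg : ∀ n : ℕ, 0 ≤ ‖Λ n‖^(-2:ℤ) := fun n => zpow_nonneg (norm_nonneg _) _
    apply summable_of_sum_le (c := cs + 2*D*2) (fun n => hterm_nonneg n)
    intro un
    rw [← Finset.sum_filter_add_sum_filter_not un (fun n => ‖Λ n‖ ≤ 1)]
    have hsmall : ∑ n ∈ un.filter (fun n => ‖Λ n‖ ≤ 1), ‖Λ n‖^(-2:ℤ) ≤ cs := by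
      apply Finset.sum_le_sum_of_subset_of_nonneg
      · intro n hn
        rw [Set.Finite.mem_toFinset]
        exact (Finset.mem_filter.mp hn).2
      · exact fun n _ _ => hterm_nonneg n
    have hlarge : ∑ n ∈ un.filter (fun n => ¬ ‖Λ n‖ ≤ 1), ‖Λ n‖^(-2:ℤ) ≤ 2*D*2 := by
      set u' := un.filter (fun n => ¬ ‖Λ n‖ ≤ 1) with hu'def
      have hu'big : ∀ n ∈ u', 1 < ‖Λ n‖ := fun n hn =>
        not_le.mp (Finset.mem_filter.mp hn).2
      set jf : ℕ → ℕ := fun n => ⌊Real.logb 2 ‖Λ n‖⌋₊ with hjfdef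
      have hjf_low : ∀ n ∈ u', (2:ℝ)^(jf n) ≤ ‖Λ n‖ := by
        intro n hn
        have h1 : (0:ℝ) ≤ Real.logb 2 ‖Λ n‖ := Real.logb_nonneg one_lt_two (hu'big n hn).le
        have h2 : ((jf n : ℕ) : ℝ) ≤ Real.logb 2 ‖Λ n‖ := Nat.floor_le h1
        calc (2:ℝ)^(jf n) = (2:ℝ)^((jf n : ℕ) : ℝ) := by rw [Real.rpow_natCast]
          _ ≤ (2:ℝ)^(Real.logb 2 ‖Λ n‖) := Real.rpow_le_rpow_of_exponent_le one_le_two h2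
          _ = ‖Λ n‖ := Real.rpow_logb two_pos (by norm_num) (hr0 n)
      have hjf_high : ∀ n ∈ u', ‖Λ n‖ ≤ (2:ℝ)^(jf n + 1) := by
        intro n hn
        have h2 : Real.logb 2 ‖Λ n‖ < (jf n : ℝ) + 1 := Nat.lt_floor_add_one _
        calc ‖Λ n‖ = (2:ℝ)^(Real.logb 2 ‖Λ n‖) :=
              (Real.rpow_logb two_pos (by norm_num) (hr0 n)).symm
          _ ≤ (2:ℝ)^((jf n : ℝ) + 1) :=
              Real.rpow_le_rpow_of_exponent_le one_le_two h2.le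
          _ = (2:ℝ)^(jf n + 1) := by
              rw [show ((jf n : ℝ) + 1) = (((jf n + 1 : ℕ)) : ℝ) by push_cast; ring,
                Real.rpow_natCast]
      have hfib := Finset.sum_fiberwise_of_maps_to (g := jf) (t := u'.image jf)
        (fun n hn => Finset.mem_image_of_mem jf hn) (fun n => ‖Λ n‖^(-2:ℤ))
      rw [← hfib]
      have hfiber : ∀ j ∈ u'.image jf,
          ∑ n ∈ u'.filter (fun n => jf n = j), ‖Λ n‖^(-2:ℤ) ≤ 2*D*(1/2:ℝ)^j := by
        intro j _
        set uj := u'.filter (fun n => jf n = j) with hujdef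
        have hujsub : uj ⊆ u' := Finset.filter_subset _ _
        have h2pow1 : (1:ℝ) ≤ 2^(j+1) := one_le_pow₀ one_le_two
        have hcardj : (uj.card : ℝ) ≤ D * 2^(j+1) := by
          apply hcardN (2^(j+1)) h2pow1 uj
          intro n hn
          have h := hjf_high n (hujsub hn)
          rw [(Finset.mem_filter.mp hn).2] at h
          exact_mod_cast h
        have hterm : ∀ n ∈ uj, ‖Λ n‖^(-2:ℤ) ≤ ((1/2:ℝ)^j)^2 := by
          intro n hn
          have h1 := hjf_low n (hujsub hn)
          rw [(Finset.mem_filter.mp hn).2] at h1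
          have hr := hr0 n
          have heq2 : ‖Λ n‖^(-2:ℤ) = (‖Λ n‖^2)⁻¹ := by
            rw [zpow_neg]
            norm_cast
          rw [heq2]
          have h3 : ((2:ℝ)^j)^2 ≤ ‖Λ n‖^2 := by nlinarith [(by positivity : (0:ℝ) < 2^j)]
          have h4 : (‖Λ n‖^2)⁻¹ ≤ (((2:ℝ)^j)^2)⁻¹ := by
            apply inv_anti₀ (by positivity) h3
          calc (‖Λ n‖^2)⁻¹ ≤ (((2:ℝ)^j)^2)⁻¹ := h4
            _ = ((1/2:ℝ)^j)^2 := by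
                rw [← inv_pow, ← inv_pow]
                norm_num
        have h2j : (2:ℝ)^j * (1/2:ℝ)^j = 1 := by
          rw [← mul_pow]; norm_num
        calc ∑ n ∈ uj, ‖Λ n‖^(-2:ℤ) ≤ uj.card • (((1/2:ℝ)^j)^2) :=
              Finset.sum_le_card_nsmul uj _ _ hterm
          _ = (uj.card : ℝ) * ((1/2:ℝ)^j)^2 := by rw [nsmul_eq_mul]
          _ ≤ D * 2^(j+1) * ((1/2:ℝ)^j)^2 :=
              mul_le_mul_of_nonneg_right hcardj (by positivity)
          _ = 2*D*(1/2:ℝ)^j := by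
              rw [pow_succ]
              linear_combination (2*D*(1/2:ℝ)^j) * h2j
      calc ∑ j ∈ u'.image jf, ∑ n ∈ u'.filter (fun n => jf n = j), ‖Λ n‖^(-2:ℤ)
          ≤ ∑ j ∈ u'.image jf, 2*D*(1/2:ℝ)^j := Finset.sum_le_sum hfiber
        _ = 2*D * ∑ j ∈ u'.image jf, (1/2:ℝ)^j := by rw [← Finset.mul_sum]
        _ ≤ 2*D*2 := by
            apply mul_le_mul_of_nonneg_left ?_ (by positivity)
            have hsum := Summable.sum_le_tsum (u'.image jf) (fun j _ => by positivity)
              (summable_geometric_of_lt_one (by norm_num) (by norm_num : (1/2:ℝ) < 1))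
            rw [tsum_geometric_of_lt_one (by norm_num) (by norm_num)] at hsum
            norm_num at hsum
            exact hsum
    exact add_le_add hsmall hlarge
end
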